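/- arXiv:1401.4713 — 9 statements merged into one kernel-verified Lean document; each statement's English description precedes it below -/
import Mathlib

section
/- Let n ≥ 2 and m ≥ 1 be integers, and let z_0 ∈ ℂ be a periodic point of minimal period m of the map f_0(w) = w^n with z_0 ≠ 0. For a parameter vector a = (a_0,…,a_{n−2},a_{n+1},…,a_{2n−1}) ∈ ℂ^{2n−2} define the rational map f_a(z) = (z^n + a_{n−2}z^{n−2} + ⋯ + a_1 z + a_0)/(1 − a_{n+1}z − a_{n+2}z^2 − ⋯ − a_{2n−1}z^{n−1}). Suppose z(·) is a holomorphic function on a neighborhood of 0 in ℂ^{2n−2} such that z(0) = z_0 and f_a^{∘m}(z(a)) = z(a) for all a in that neighborhood, and let λ(a) denote the derivative of the m-th iterate f_a^{∘m} at the point z(a). Then for every index j with 0 ≤ j ≤ 2n−1, j ≠ n−1, j ≠ n, the partial derivative of λ at a = 0 with respect to a_j equals (j·n^{m−1} − n^m)·Σ_{i=0}^{m−1} z_0^{n^i(j−n)}, where the powers of the nonzero number z_0 are integer powers. -/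
/-- Extract the `i`-th coordinate of a parameter vector `a ∈ ℂ^{2n-2}` (junk value `0`
outside the range). The parameter coordinate `k` corresponds to the coefficient `a_{σ(k)}`
of the rational map, where `σ(k) = k` for `0 ≤ k ≤ n-2` and `σ(k) = k+2` for
`n-1 ≤ k ≤ 2n-3` (so that `σ` enumerates `{0,…,n-2} ∪ {n+1,…,2n-1}`). -/
def coeffs (n : ℕ) (a : Fin (2 * n - 2) → ℂ) : ℕ → ℂ :=
  fun i => if h : i < 2 * n - 2 then a ⟨i, h⟩ else 0

/-- The coefficient index `σ(k) ∈ {0,…,n-2} ∪ {n+1,…,2n-1}` associated to the parameter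
coordinate `k ∈ {0,…,2n-3}`. -/
def pidx (n k : ℕ) : ℕ := if k ≤ n - 2 then k else k + 2

/-- The family `f_a(z) = (z^n + a_{n-2} z^{n-2} + ⋯ + a_1 z + a_0) /
(1 - a_{n+1} z - a_{n+2} z^2 - ⋯ - a_{2n-1} z^{n-1})`, where the parameter coordinate
`k ∈ {0,…,n-2}` stores `a_k` and the parameter coordinate `n-1+i ∈ {n-1,…,2n-3}`
stores `a_{n+1+i}`. -/
noncomputable def Fam (n : ℕ) (a : Fin (2 * n - 2) → ℂ) (z : ℂ) : ℂ :=
  (z ^ n + ∑ i ∈ Finset.range (n - 1), coeffs n a i * z ^ i) /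
    (1 - ∑ i ∈ Finset.range (n - 1), coeffs n a (n - 1 + i) * z ^ (i + 1))

open Finset Filter

noncomputable def Pn (n : ℕ) (a : Fin (2*n-2) → ℂ) (w : ℂ) : ℂ :=
  w ^ n + ∑ i ∈ range (n-1), coeffs n a i * w ^ i
noncomputable def Qn (n : ℕ) (a : Fin (2*n-2) → ℂ) (w : ℂ) : ℂ :=
  1 - ∑ i ∈ range (n-1), coeffs n a (n-1+i) * w ^ (i+1)
noncomputable def gP (n : ℕ) (a : Fin (2*n-2) → ℂ) (w : ℂ) : ℂ :=
  n * w ^ (n-1) + ∑ i ∈ range (n-1), coeffs n a i * (i * w ^ (i-1))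
noncomputable def gQ (n : ℕ) (a : Fin (2*n-2) → ℂ) (w : ℂ) : ℂ :=
  -∑ i ∈ range (n-1), coeffs n a (n-1+i) * ((i+1) * w ^ i)
noncomputable def gg (n : ℕ) (a : Fin (2*n-2) → ℂ) (w : ℂ) : ℂ :=
  (gP n a w * Qn n a w - Pn n a w * gQ n a w) / (Qn n a w) ^ 2

lemma Fam_eq (n : ℕ) (a : Fin (2*n-2) → ℂ) (w : ℂ) : Fam n a w = Pn n a w / Qn n a w := rfl

lemma hasDerivAt_Pn (n : ℕ) (a : Fin (2*n-2) → ℂ) (w : ℂ) :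
    HasDerivAt (Pn n a) (gP n a w) w := by
  apply HasDerivAt.add (hasDerivAt_pow n w)
  exact HasDerivAt.fun_sum fun i _ => (hasDerivAt_pow i w).const_mul _

lemma hasDerivAt_Qn (n : ℕ) (a : Fin (2*n-2) → ℂ) (w : ℂ) :
    HasDerivAt (Qn n a) (gQ n a w) w := by
  apply HasDerivAt.const_sub
  have : ∀ i ∈ range (n-1), HasDerivAt (fun w : ℂ => coeffs n a (n-1+i) * w ^ (i+1))
      (coeffs n a (n-1+i) * ((i+1) * w ^ i)) w := by
    intro i _
    simpa using (hasDerivAt_pow (i+1) w).const_mul (coeffs n a (n-1+i))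
  exact HasDerivAt.fun_sum this

lemma hasDerivAt_Fam (n : ℕ) (a : Fin (2*n-2) → ℂ) (w : ℂ) (h : Qn n a w ≠ 0) :
    HasDerivAt (Fam n a) (gg n a w) w :=
  (hasDerivAt_Pn n a w).div (hasDerivAt_Qn n a w) h

lemma coeffs_zero (n i : ℕ) : coeffs n (0 : Fin (2*n-2) → ℂ) i = 0 := by
  unfold coeffs; split <;> simp

lemma Pn_zero (n : ℕ) (w : ℂ) : Pn n 0 w = w ^ n := by simp [Pn, coeffs_zero]
lemma Qn_zero (n : ℕ) (w : ℂ) : Qn n 0 w = 1 := by simp [Qn, coeffs_zero]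
lemma gg_zero (n : ℕ) (w : ℂ) : gg n 0 w = n * w ^ (n-1) := by
  simp [gg, gP, gQ, Pn_zero, Qn_zero, coeffs_zero]

lemma Fam_zero (n : ℕ) : Fam n 0 = fun w : ℂ => w ^ n := by
  funext w; rw [Fam_eq, Pn_zero, Qn_zero, div_one]

lemma pow_iter (n : ℕ) : ∀ (i : ℕ) (x : ℂ), (fun w : ℂ => w ^ n)^[i] x = x ^ n ^ i := by
  intro i
  induction i with
  | zero => simp
  | succ i ih =>
    intro x
    rw [Function.iterate_succ_apply', ih, pow_succ, pow_mul]

lemma diff_coeffs (n i : ℕ) :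
    Differentiable ℂ (fun p : (Fin (2*n-2) → ℂ) × ℂ => coeffs n p.1 i) := by
  unfold coeffs
  split
  · exact ((ContinuousLinearMap.proj _ : (Fin (2*n-2) → ℂ) →L[ℂ] ℂ).differentiable).comp
      differentiable_fst
  · exact differentiable_const 0

lemma diff_Pn (n : ℕ) : Differentiable ℂ (fun p : (Fin (2*n-2) → ℂ) × ℂ => Pn n p.1 p.2) := by
  apply (differentiable_snd.pow n).add
  exact Differentiable.fun_sum fun i _ => (diff_coeffs n i).mul (differentiable_snd.pow i)

lemma diff_Qn (n : ℕ) : Differentiable ℂ (fun p : (Fin (2*n-2) → ℂ) × ℂ => Qn n p.1 p.2) := by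
  apply (differentiable_const 1).sub
  exact Differentiable.fun_sum fun i _ => (diff_coeffs n _).mul (differentiable_snd.pow _)

lemma diff_gP (n : ℕ) : Differentiable ℂ (fun p : (Fin (2*n-2) → ℂ) × ℂ => gP n p.1 p.2) := by
  apply ((differentiable_const (n:ℂ)).mul (differentiable_snd.pow _)).add
  exact Differentiable.fun_sum fun i _ =>
    (diff_coeffs n i).mul ((differentiable_const _).mul (differentiable_snd.pow _))

lemma diff_gQ (n : ℕ) : Differentiable ℂ (fun p : (Fin (2*n-2) → ℂ) × ℂ => gQ n p.1 p.2) := by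
  apply Differentiable.neg
  exact Differentiable.fun_sum fun i _ =>
    (diff_coeffs n _).mul ((differentiable_const _).mul (differentiable_snd.pow _))

lemma diffAt_gg (n : ℕ) (a : Fin (2*n-2) → ℂ) (w : ℂ) (h : Qn n a w ≠ 0) :
    DifferentiableAt ℂ (fun p : (Fin (2*n-2) → ℂ) × ℂ => gg n p.1 p.2) (a, w) := by
  unfold gg
  simp only [div_eq_mul_inv]
  apply DifferentiableAt.mul
  · exact (((diff_gP n).mul (diff_Qn n)).sub ((diff_Pn n).mul (diff_gQ n))).differentiableAt
  · exact DifferentiableAt.inv ((diff_Qn n).pow 2).differentiableAt (pow_ne_zero 2 h)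

lemma diffAt_Fam (n : ℕ) (a : Fin (2*n-2) → ℂ) (w : ℂ) (h : Qn n a w ≠ 0) :
    DifferentiableAt ℂ (fun p : (Fin (2*n-2) → ℂ) × ℂ => Fam n p.1 p.2) (a, w) := by
  unfold Fam
  simp only [div_eq_mul_inv]
  exact DifferentiableAt.mul (diff_Pn n).differentiableAt
    (DifferentiableAt.inv ((diff_Qn n).differentiableAt) h)

open Finset Filter
set_option synthInstance.maxHeartbeats 1000000

section Line
variable {n : ℕ} (hn : 2 ≤ n) (k : Fin (2*n-2))

lemma coeffs_line (t : ℂ) (i : ℕ) :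
    coeffs n ((t • (Pi.single k 1 : Fin (2*n-2) → ℂ))) i = if i = (k : ℕ) then t else 0 := by
  unfold coeffs
  split
  · rename_i h
    rw [Pi.smul_apply, Pi.single_apply]
    have : ((⟨i, h⟩ : Fin (2*n-2)) = k) ↔ i = (k : ℕ) := by
      rw [Fin.ext_iff]
    simp only [this]
    split <;> simp
  · rename_i h
    have : i ≠ (k : ℕ) := by have := k.isLt; omega
    simp [this]

-- Case A : (k:ℕ) < n - 1
lemma PnA (hk : (k:ℕ) < n - 1) (t w : ℂ) :
    Pn n ((t • (Pi.single k 1 : Fin (2*n-2) → ℂ))) w = w ^ n + t * w ^ (k:ℕ) := by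
  unfold Pn
  congr 1
  simp only [coeffs_line, ite_mul, zero_mul]
  rw [Finset.sum_ite_eq' (range (n-1)) ((k:ℕ)) (fun i => t * w ^ i)]
  simp [hk]

lemma QnA (hk : (k:ℕ) < n - 1) (t w : ℂ) :
    Qn n ((t • (Pi.single k 1 : Fin (2*n-2) → ℂ))) w = 1 := by
  unfold Qn
  have : ∀ i ∈ range (n-1), coeffs n ((t • (Pi.single k 1 : Fin (2*n-2) → ℂ))) (n-1+i) * w ^ (i+1) = 0 := by
    intro i _
    rw [coeffs_line]
    have : ¬ (n - 1 + i = (k:ℕ)) := by omega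
    simp [this]
  rw [Finset.sum_congr rfl this]
  simp

lemma gPA (hk : (k:ℕ) < n - 1) (t w : ℂ) :
    gP n ((t • (Pi.single k 1 : Fin (2*n-2) → ℂ))) w = n * w ^ (n-1) + t * ((k:ℕ) * w ^ ((k:ℕ)-1)) := by
  unfold gP
  congr 1
  simp only [coeffs_line, ite_mul, zero_mul]
  rw [Finset.sum_ite_eq' (range (n-1)) ((k:ℕ)) (fun i => t * ((i:ℂ) * w ^ (i-1)))]
  simp [hk]

lemma gQA (hk : (k:ℕ) < n - 1) (t w : ℂ) :
    gQ n ((t • (Pi.single k 1 : Fin (2*n-2) → ℂ))) w = 0 := by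
  unfold gQ
  have : ∀ i ∈ range (n-1), coeffs n ((t • (Pi.single k 1 : Fin (2*n-2) → ℂ))) (n-1+i) * ((i+1:ℂ) * w ^ i) = 0 := by
    intro i _
    rw [coeffs_line]
    have : ¬ (n - 1 + i = (k:ℕ)) := by omega
    simp [this]
  rw [Finset.sum_congr rfl this]
  simp

-- Case B : n - 1 ≤ (k:ℕ); set q := (k:ℕ) - (n-1) + 1
lemma PnB (hk : n - 1 ≤ (k:ℕ)) (t w : ℂ) :
    Pn n ((t • (Pi.single k 1 : Fin (2*n-2) → ℂ))) w = w ^ n := by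
  unfold Pn
  have : ∀ i ∈ range (n-1), coeffs n ((t • (Pi.single k 1 : Fin (2*n-2) → ℂ))) i * w ^ i = 0 := by
    intro i hi
    rw [coeffs_line]
    simp only [Finset.mem_range] at hi
    have : ¬ (i = (k:ℕ)) := by omega
    simp [this]
  rw [Finset.sum_congr rfl this]
  simp

lemma gPB (hk : n - 1 ≤ (k:ℕ)) (t w : ℂ) :
    gP n ((t • (Pi.single k 1 : Fin (2*n-2) → ℂ))) w = n * w ^ (n-1) := by
  unfold gP
  have : ∀ i ∈ range (n-1), coeffs n ((t • (Pi.single k 1 : Fin (2*n-2) → ℂ))) i * ((i:ℂ) * w ^ (i-1)) = 0 := by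
    intro i hi
    rw [coeffs_line]
    simp only [Finset.mem_range] at hi
    have : ¬ (i = (k:ℕ)) := by omega
    simp [this]
  rw [Finset.sum_congr rfl this]
  simp

lemma QnB (hn : 2 ≤ n) (hk : n - 1 ≤ (k:ℕ)) (t w : ℂ) :
    Qn n ((t • (Pi.single k 1 : Fin (2*n-2) → ℂ))) w = 1 - t * w ^ ((k:ℕ) - (n-1) + 1) := by
  unfold Qn
  congr 1
  have hconv : ∀ i ∈ range (n-1),
      coeffs n ((t • (Pi.single k 1 : Fin (2*n-2) → ℂ))) (n-1+i) * w ^ (i+1)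
        = if i = (k:ℕ) - (n-1) then t * w ^ (i+1) else 0 := by
    intro i _
    rw [coeffs_line]
    have : (n - 1 + i = (k:ℕ)) ↔ i = (k:ℕ) - (n-1) := by omega
    simp only [this]
    split <;> simp
  rw [Finset.sum_congr rfl hconv,
    Finset.sum_ite_eq' (range (n-1)) ((k:ℕ) - (n-1)) (fun i => t * w ^ (i+1))]
  have hmem : (k:ℕ) - (n-1) ∈ range (n-1) := by
    simp only [Finset.mem_range]
    have := k.isLt
    omega
  simp [hmem]

lemma gQB (hn : 2 ≤ n) (hk : n - 1 ≤ (k:ℕ)) (t w : ℂ) :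
    gQ n ((t • (Pi.single k 1 : Fin (2*n-2) → ℂ))) w
      = -(t * ((((k:ℕ) - (n-1) + 1 : ℕ) : ℂ) * w ^ ((k:ℕ) - (n-1)))) := by
  unfold gQ
  congr 1
  have hconv : ∀ i ∈ range (n-1),
      coeffs n ((t • (Pi.single k 1 : Fin (2*n-2) → ℂ))) (n-1+i) * ((i+1:ℂ) * w ^ i)
        = if i = (k:ℕ) - (n-1) then t * ((i+1:ℂ) * w ^ i) else 0 := by
    intro i _
    rw [coeffs_line]
    have : (n - 1 + i = (k:ℕ)) ↔ i = (k:ℕ) - (n-1) := by omega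
    simp only [this]
    split <;> simp
  rw [Finset.sum_congr rfl hconv,
    Finset.sum_ite_eq' (range (n-1)) ((k:ℕ) - (n-1)) (fun i => t * ((i+1:ℂ) * w ^ i))]
  have hmem : (k:ℕ) - (n-1) ∈ range (n-1) := by
    simp only [Finset.mem_range]
    have := k.isLt
    omega
  simp only [hmem, if_true]
  push_cast
  ring

end Line


section Key
variable {n : ℕ}

lemma zpow_natsub (Zv : ℂ) (hZ : Zv ≠ 0) (a b : ℕ) (h : b ≤ a) :
    Zv ^ ((a:ℤ) - (b:ℤ)) = Zv ^ (a - b : ℕ) := by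
  rw [show (a:ℤ) - (b:ℤ) = ((a - b : ℕ) : ℤ) by omega, zpow_natCast]

lemma line_Fam (hn : 2 ≤ n) (k : Fin (2*n-2)) {ω : ℂ → ℂ} {ζ Zv : ℂ}
    (hω : HasDerivAt ω ζ 0) (h0 : ω 0 = Zv) :
    HasDerivAt (fun t => Fam n (t • (Pi.single k 1 : Fin (2*n-2) → ℂ)) (ω t))
      (Zv ^ (pidx n (k:ℕ)) + n * Zv ^ (n-1) * ζ) 0 := by
  rcases lt_or_ge ((k:ℕ)) (n-1) with hk | hk
  · have hj : pidx n (k:ℕ) = (k:ℕ) := if_pos (by omega)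
    have hfun : (fun t => Fam n (t • (Pi.single k 1 : Fin (2*n-2) → ℂ)) (ω t))
        = fun t => (ω t) ^ n + t * (ω t) ^ (k:ℕ) := by
      funext t
      rw [Fam_eq, PnA k hk, QnA k hk, div_one]
    rw [hfun]
    have H := (hω.pow n).add ((hasDerivAt_id 0).mul (hω.pow (k:ℕ)))
    refine H.congr_deriv ?_
    simp only [Pi.pow_apply, Pi.mul_apply, Pi.sub_apply, Pi.neg_apply, Pi.add_apply]
    rw [h0, hj]
    simp only [id_eq]
    ring
  · have hj : pidx n (k:ℕ) = (k:ℕ) + 2 := if_neg (by omega)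
    set q : ℕ := (k:ℕ) - (n-1) + 1 with hq
    have hfun : (fun t => Fam n (t • (Pi.single k 1 : Fin (2*n-2) → ℂ)) (ω t))
        = fun t => (ω t) ^ n / (1 - t * (ω t) ^ q) := by
      funext t
      rw [Fam_eq, PnB k hk, QnB k hn hk]
    rw [hfun]
    have hd : HasDerivAt (fun t : ℂ => 1 - t * (ω t) ^ q)
        (0 - (1 * (ω 0) ^ q + 0 * ((q:ℂ) * (ω 0) ^ (q-1) * ζ))) 0 :=
      (hasDerivAt_const 0 (1:ℂ)).sub ((hasDerivAt_id 0).mul (hω.pow q))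
    have hne : (1 : ℂ) - 0 * (ω 0) ^ q ≠ 0 := by simp
    have H := (hω.pow n).div hd hne
    refine H.congr_deriv ?_
    simp only [Pi.pow_apply, Pi.mul_apply, Pi.sub_apply, Pi.neg_apply, Pi.add_apply]
    rw [h0, hj]
    have hnq : n + q = (k:ℕ) + 2 := by omega
    field_simp
    rw [← hnq, pow_add]
    ring

lemma zpow_natsub' (Zv : ℂ) (a : ℕ) (c : ℤ) (b : ℕ) (h : (a:ℤ) - c = (b:ℕ)) :
    Zv ^ ((a:ℤ) - c) = Zv ^ b := by rw [h, zpow_natCast]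

lemma line_g (hn : 2 ≤ n) (k : Fin (2*n-2)) {ω : ℂ → ℂ} {ζ Zv : ℂ}
    (hω : HasDerivAt ω ζ 0) (h0 : ω 0 = Zv) (hZ : Zv ≠ 0) :
    HasDerivAt (fun t => gg n (t • (Pi.single k 1 : Fin (2*n-2) → ℂ)) (ω t))
      ((pidx n (k:ℕ) : ℂ) * Zv ^ ((pidx n (k:ℕ) : ℤ) - 1)
        + n * (n-1) * Zv ^ ((n:ℤ) - 2) * ζ) 0 := by
  rcases lt_or_ge ((k:ℕ)) (n-1) with hk | hk
  · have hj : pidx n (k:ℕ) = (k:ℕ) := if_pos (by omega)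
    have hfun : (fun t => gg n (t • (Pi.single k 1 : Fin (2*n-2) → ℂ)) (ω t))
        = fun t => (n:ℂ) * (ω t) ^ (n-1) + t * ((k:ℕ) * (ω t) ^ ((k:ℕ)-1)) := by
      funext t
      unfold gg
      rw [gPA k hk, QnA k hk, gQA k hk, mul_one, mul_zero, sub_zero, one_pow, div_one]
    rw [hfun]
    have H := ((hω.pow (n-1)).const_mul (n:ℂ)).add
      ((hasDerivAt_id 0).mul ((hω.pow ((k:ℕ)-1)).const_mul (((k:ℕ):ℂ))))
    refine H.congr_deriv ?_
    simp only [Pi.pow_apply, Pi.mul_apply, Pi.sub_apply, Pi.neg_apply, Pi.add_apply]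
    rw [h0, hj]
    simp only [id_eq]
    rw [zpow_natsub' Zv n 2 (n-2) (by omega), show n-1-1 = n-2 by omega]
    rw [Nat.cast_sub (by omega : 1 ≤ n)]
    by_cases hk0 : (k:ℕ) = 0
    · simp [hk0]
      ring
    · rw [zpow_natsub' Zv ((k:ℕ)) 1 ((k:ℕ)-1) (by omega)]
      push_cast
      ring
  · have hj : pidx n (k:ℕ) = (k:ℕ) + 2 := if_neg (by omega)
    set q : ℕ := (k:ℕ) - (n-1) + 1 with hq
    have hfun : (fun t => gg n (t • (Pi.single k 1 : Fin (2*n-2) → ℂ)) (ω t))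
        = fun t => ((n:ℂ) * (ω t) ^ (n-1) * (1 - t * (ω t) ^ q)
            - (ω t) ^ n * (-(t * ((q:ℂ) * (ω t) ^ (q-1)))))
          / (1 - t * (ω t) ^ q) ^ 2 := by
      funext t
      unfold gg
      rw [gPB k hk, QnB k hn hk, PnB k hk, gQB k hn hk,
        show (k:ℕ) - (n-1) = q - 1 by omega, show q - 1 + 1 = q by omega]
    rw [hfun]
    have hd : HasDerivAt (fun t : ℂ => 1 - t * (ω t) ^ q)
        (0 - (1 * (ω 0) ^ q + 0 * ((q:ℂ) * (ω 0) ^ (q-1) * ζ))) 0 :=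
      (hasDerivAt_const 0 (1:ℂ)).sub ((hasDerivAt_id 0).mul (hω.pow q))
    have hnum := (((hω.pow (n-1)).const_mul (n:ℂ)).mul hd).sub
      ((hω.pow n).mul (((hasDerivAt_id 0).mul ((hω.pow (q-1)).const_mul ((q:ℂ)))).neg))
    have hne : ((1:ℂ) - 0 * (ω 0) ^ q) ^ 2 ≠ 0 := by simp
    have H := hnum.div (hd.pow 2) hne
    refine H.congr_deriv ?_
    simp only [Pi.pow_apply, Pi.mul_apply, Pi.sub_apply, Pi.neg_apply, Pi.add_apply]
    rw [h0, hj]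
    simp only [id_eq]
    rw [zpow_natsub' Zv n 2 (n-2) (by omega)]
    rw [show ((((k:ℕ) + 2 : ℕ) : ℤ) - 1) = (((k:ℕ) + 1 : ℕ) : ℤ) by omega, zpow_natCast]
    obtain ⟨p, hp⟩ : ∃ p, n = p + 2 := ⟨n - 2, by omega⟩
    obtain ⟨r, hr⟩ : ∃ r, q = r + 1 := ⟨q - 1, by omega⟩
    have hkpr : (k:ℕ) = p + 1 + r := by omega
    rw [hkpr, hp, hr]
    simp only [show p+2-1 = p+1 from by omega, show p+2-2 = p from by omega,
      show r+1-1 = r from by omega, show p+1+r+1 = (p+1)+(r+1)-0 from by omega]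
    field_simp
    push_cast
    simp only [Nat.sub_zero]
    ring

end Key


/-- Lemma 4.1 (computation of the partial derivatives of the multiplier of a periodic
orbit of `f_0(z) = z^n` in the family `f_a`): for every parameter coordinate `k`, with
corresponding coefficient index `j = pidx n k` (which ranges exactly over
`0 ≤ j ≤ 2n-1`, `j ≠ n-1`, `j ≠ n`),
`∂λ_{z_0}/∂a_j (0) = (j n^{m-1} - n^m) ∑_{i=0}^{m-1} z_0^{n^i (j-n)}`. -/
theorem multiplier_partial_deriv (n m : ℕ) (hn : 2 ≤ n) (hm : 1 ≤ m)
    (z0 : ℂ) (hz0 : z0 ≠ 0)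
    (hper : (fun w : ℂ => w ^ n)^[m] z0 = z0)
    (hmin : ∀ r, 1 ≤ r → r < m → (fun w : ℂ => w ^ n)^[r] z0 ≠ z0)
    (U : Set (Fin (2 * n - 2) → ℂ)) (hU : U ∈ nhds (0 : Fin (2 * n - 2) → ℂ))
    (z : (Fin (2 * n - 2) → ℂ) → ℂ) (hzhol : DifferentiableOn ℂ z U)
    (hz00 : z 0 = z0)
    (hfix : ∀ a ∈ U, (Fam n a)^[m] (z a) = z a)
    (k : Fin (2 * n - 2)) :
    fderiv ℂ (fun a => deriv ((Fam n a)^[m]) (z a)) 0 (Pi.single k 1) =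
      ((pidx n (k : ℕ) : ℂ) * (n : ℂ) ^ (m - 1) - (n : ℂ) ^ m) *
        ∑ i ∈ Finset.range m, z0 ^ ((n : ℤ) ^ i * ((pidx n (k : ℕ) : ℤ) - (n : ℤ))) := by
  classical
  have hnC : (n:ℂ) ≠ 0 := Nat.cast_ne_zero.mpr (by omega)
  set jn : ℕ := pidx n (k:ℕ) with hjn
  -- the orbit of z0 under w ^ n
  set Z : ℕ → ℂ := fun i => z0 ^ (n ^ i) with hZdef
  have hZne : ∀ i, Z i ≠ 0 := fun i => pow_ne_zero _ hz0
  have hZsucc : ∀ i, Z (i+1) = Z i ^ n := by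
    intro i; simp only [hZdef]; rw [pow_succ, pow_mul]
  have hZ0 : Z 0 = z0 := by simp [hZdef]
  have hZm : Z m = z0 := by
    have := hper; rwa [pow_iter] at this
  -- the moving orbit
  set W : ℕ → (Fin (2*n-2) → ℂ) → ℂ := fun i a => (Fam n a)^[i] (z a) with hWdef
  have hWsucc : ∀ i a, W (i+1) a = Fam n a (W i a) := fun i a =>
    Function.iterate_succ_apply' _ _ _
  have hW0 : ∀ i, W i 0 = Z i := by
    intro i
    show (Fam n 0)^[i] (z 0) = Z i
    rw [Fam_zero, hz00, pow_iter]
  have hzdiff : DifferentiableAt ℂ z 0 := hzhol.differentiableAt hU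
  have hWdiff : ∀ i, DifferentiableAt ℂ (W i) 0 := by
    intro i
    induction i with
    | zero => exact hzdiff
    | succ i ih =>
      have h1 : DifferentiableAt ℂ (fun p : (Fin (2*n-2) → ℂ) × ℂ => Fam n p.1 p.2)
          ((0 : Fin (2*n-2) → ℂ), W i 0) := by
        rw [hW0]
        exact diffAt_Fam n 0 (Z i) (by rw [Qn_zero]; exact one_ne_zero)
      have h4 : DifferentiableAt ℂ (fun a => Fam n a (W i a)) 0 := by
        have h3 : (fun a => Fam n a (W i a))
            = (fun p : (Fin (2*n-2) → ℂ) × ℂ => Fam n p.1 p.2) ∘ (fun a => (a, W i a)) := rfl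
        rw [h3]
        apply DifferentiableAt.comp
        · exact h1
        · exact differentiableAt_id.prodMk ih
      exact h4.congr_of_eventuallyEq (Filter.Eventually.of_forall fun a => hWsucc i a)
  have hQev : ∀ i, ∀ᶠ a in nhds (0 : Fin (2*n-2) → ℂ), Qn n a (W i a) ≠ 0 := by
    intro i
    have hc : ContinuousAt (fun a => Qn n a (W i a)) 0 := by
      have h1 : ContinuousAt (fun p : (Fin (2*n-2) → ℂ) × ℂ => Qn n p.1 p.2)
          ((0 : Fin (2*n-2) → ℂ), W i 0) := (diff_Qn n).continuous.continuousAt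
      have h3 : (fun a => Qn n a (W i a))
          = (fun p : (Fin (2*n-2) → ℂ) × ℂ => Qn n p.1 p.2) ∘ (fun a => (a, W i a)) := rfl
      rw [h3]
      apply ContinuousAt.comp
      · exact h1
      · exact continuousAt_id.prodMk (hWdiff i).continuousAt
    have h1 : (fun a => Qn n a (W i a)) 0 ≠ 0 := by
      simp only [hW0, Qn_zero]; exact one_ne_zero
    exact hc.eventually_ne h1
  -- the product formula for the multiplier
  have hprod : ∀ᶠ a in nhds (0 : Fin (2*n-2) → ℂ),
      deriv ((Fam n a)^[m]) (z a) = ∏ l ∈ range m, gg n a (W l a) := by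
    have hall : ∀ᶠ a in nhds (0 : Fin (2*n-2) → ℂ), ∀ l ∈ range m, Qn n a (W l a) ≠ 0 :=
      (Filter.eventually_all_finset _).mpr (fun l _ => hQev l)
    filter_upwards [hall] with a ha
    have key : ∀ i, i ≤ m → HasDerivAt ((Fam n a)^[i]) (∏ l ∈ range i, gg n a (W l a)) (z a) := by
      intro i
      induction i with
      | zero => intro _; simpa using hasDerivAt_id (z a)
      | succ i ih =>
        intro him
        have hQ : Qn n a (W i a) ≠ 0 := ha i (mem_range.mpr (by omega))
        have h2 := (hasDerivAt_Fam n a (W i a) hQ).comp (z a) (ih (by omega))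
        rw [Function.iterate_succ', prod_range_succ, mul_comm]
        exact h2
    exact (key m le_rfl).deriv
  -- differentiability at 0
  have hgdiffAt : ∀ i, DifferentiableAt ℂ (fun a => gg n a (W i a)) 0 := by
    intro i
    have h1 : DifferentiableAt ℂ (fun p : (Fin (2*n-2) → ℂ) × ℂ => gg n p.1 p.2)
        ((0 : Fin (2*n-2) → ℂ), W i 0) := by
      rw [hW0]
      exact diffAt_gg n 0 (Z i) (by rw [Qn_zero]; exact one_ne_zero)
    have h3 : (fun a => gg n a (W i a))
        = (fun p : (Fin (2*n-2) → ℂ) × ℂ => gg n p.1 p.2) ∘ (fun a => (a, W i a)) := rfl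
    rw [h3]
    apply DifferentiableAt.comp
    · exact h1
    · exact differentiableAt_id.prodMk (hWdiff i)
  have hproddiff : DifferentiableAt ℂ (fun a => ∏ l ∈ range m, gg n a (W l a)) 0 := by
    suffices h : ∀ i, DifferentiableAt ℂ (fun a => ∏ l ∈ range i, gg n a (W l a)) 0 from h m
    intro i
    induction i with
    | zero => simpa using differentiableAt_const (1:ℂ)
    | succ i ih =>
      simp only [prod_range_succ]
      exact ih.mul (hgdiffAt i)
  have hΛdiff : DifferentiableAt ℂ (fun a => deriv ((Fam n a)^[m]) (z a)) 0 :=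
    hproddiff.congr_of_eventuallyEq hprod
  -- the line through 0 in direction Pi.single k 1
  set v : Fin (2*n-2) → ℂ := Pi.single k 1 with hv
  have h0v : (0:ℂ) • v = 0 := zero_smul _ _
  have hγ : HasDerivAt (fun t : ℂ => t • v) v 0 := by
    simpa using (hasDerivAt_id (0:ℂ)).smul_const v
  have hζex : DifferentiableAt ℂ (fun t : ℂ => z (t • v)) 0 := by
    have h1 : DifferentiableAt ℂ z ((fun t : ℂ => t • v) 0) := by
      rw [show (fun t : ℂ => t • v) 0 = 0 from h0v]; exact hzdiff
    exact h1.comp 0 hγ.differentiableAt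
  obtain ⟨ζ, hζ⟩ : ∃ ζ, HasDerivAt (fun t : ℂ => z (t • v)) ζ 0 :=
    ⟨_, hζex.hasDerivAt⟩
  set τ : ℂ := ζ / z0 with hτ
  set s : ℕ → ℂ := fun i => Z i ^ ((jn:ℤ) - (n:ℤ)) with hs
  set T : ℕ → ℂ := fun i => Nat.rec τ (fun l Tl => (n:ℂ) * Tl + s l) i with hT
  have hT0 : T 0 = τ := rfl
  have hTsucc : ∀ i, T (i+1) = (n:ℂ) * T i + s i := fun i => rfl
  set c : ℕ → ℂ := fun i => ∑ l ∈ range i, ((jn:ℂ) * s l + (n:ℂ) * ((n:ℂ)-1) * T l) with hc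
  -- zpow bookkeeping
  have gB : ∀ i, Z i ^ ((n:ℤ) - 2) = Z i ^ (n-2 : ℕ) := fun i =>
    zpow_natsub' (Z i) n 2 (n-2) (by omega)
  have gA : ∀ i, Z i ^ ((jn:ℤ) - 1) = s i * Z i ^ (n-1 : ℕ) := by
    intro i
    simp only [hs]
    rw [← zpow_natCast (Z i) (n-1), ← zpow_add₀ (hZne i)]
    congr 1
    omega
  have gC : ∀ i, Z i ^ (n-1 : ℕ) = Z i ^ (n-2 : ℕ) * Z i := by
    intro i; rw [← pow_succ]; congr 1; omega
  have gD : ∀ i, Z i ^ n = Z i ^ (n-2 : ℕ) * Z i * Z i := by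
    intro i; rw [← pow_succ, ← pow_succ]; congr 1; omega
  have gJ : ∀ i, (Z i) ^ jn = Z i ^ n * s i := by
    intro i
    simp only [hs]
    rw [← zpow_natCast (Z i) jn, ← zpow_natCast (Z i) n, ← zpow_add₀ (hZne i)]
    congr 1
    omega
  -- the derivative of the moving orbit points along the line
  have hω : ∀ i, HasDerivAt (fun t : ℂ => W i (t • v)) (Z i * T i) 0 := by
    intro i
    induction i with
    | zero =>
      have : Z 0 * T 0 = ζ := by rw [hZ0, hT0, hτ]; field_simp
      rw [this]
      exact hζ
    | succ i ih =>
      have hω0 : (fun t : ℂ => W i (t • v)) 0 = Z i := by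
        show W i ((0:ℂ) • v) = Z i
        rw [h0v, hW0]
      have H := line_Fam hn k ih hω0
      have hfun : (fun t : ℂ => W (i+1) (t • v)) = fun t => Fam n (t • v) (W i (t • v)) := by
        funext t; exact hWsucc i (t • v)
      rw [hfun]
      convert H using 1
      rw [hZsucc, hTsucc, gJ i, gC i, gD i]
      ring
  -- the derivative of the partial products of the multiplier along the line
  have hℓ : ∀ i, HasDerivAt (fun t : ℂ => ∏ l ∈ range i, gg n (t • v) (W l (t • v)))
        ((n:ℂ)^i * (Z i / z0) * c i / n) 0
      ∧ (∏ l ∈ range i, gg n ((0:ℂ) • v) (W l ((0:ℂ) • v))) = (n:ℂ)^i * Z i / z0 := by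
    intro i
    induction i with
    | zero =>
      constructor
      · have hc0 : c 0 = 0 := by simp [hc]
        have : (n:ℂ)^0 * (Z 0 / z0) * c 0 / n = 0 := by rw [hc0]; ring
        rw [this]
        simpa using hasDerivAt_const (0:ℂ) (1:ℂ)
      · simp only [prod_range_zero, pow_zero, one_mul, hZ0]
        field_simp
    | succ i ih =>
      obtain ⟨ihD, ihV⟩ := ih
      have hω0 : (fun t : ℂ => W i (t • v)) 0 = Z i := by
        show W i ((0:ℂ) • v) = Z i
        rw [h0v, hW0]
      have Hg := line_g hn k (hω i) hω0 (hZne i)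
      have H := ihD.mul Hg
      constructor
      · simp only [prod_range_succ]
        refine H.congr_deriv ?_
        have hg0 : gg n ((0:ℂ) • v) (W i ((0:ℂ) • v)) = (n:ℂ) * Z i ^ (n-1 : ℕ) := by
          rw [h0v, hW0, gg_zero]
        rw [hg0, ihV, hZsucc]
        rw [show c (i+1) = c i + ((jn:ℂ) * s i + (n:ℂ) * ((n:ℂ)-1) * T i) from sum_range_succ _ i]
        rw [gA i, gB i, gC i, gD i]
        field_simp
        ring
      · simp only [prod_range_succ]
        rw [ihV, hZsucc]
        have hg0 : gg n ((0:ℂ) • v) (W i ((0:ℂ) • v)) = (n:ℂ) * Z i ^ (n-1 : ℕ) := by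
          rw [h0v, hW0, gg_zero]
        rw [hg0, gC i, gD i]
        field_simp
        ring
  -- the periodicity constraint
  have hTm : T m = τ := by
    have hev : (fun t : ℂ => W m (t • v)) =ᶠ[nhds 0] (fun t : ℂ => W 0 (t • v)) := by
      have htend : Filter.Tendsto (fun t : ℂ => t • v) (nhds 0) (nhds 0) := by
        have := hγ.continuousAt
        rwa [ContinuousAt, h0v] at this
      filter_upwards [htend.eventually_mem hU] with t ht
      exact hfix (t • v) ht
    have h1 : HasDerivAt (fun t : ℂ => W m (t • v)) (Z 0 * T 0) 0 :=
      (hω 0).congr_of_eventuallyEq hev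
    have h2 := (hω m).unique h1
    rw [hZm, hZ0, hT0] at h2
    exact mul_left_cancel₀ hz0 h2
  -- identify the fderiv along the direction with the 1-D derivative
  have hlineF : HasDerivAt (fun t : ℂ => deriv ((Fam n (t • v))^[m]) (z (t • v)))
      (fderiv ℂ (fun a => deriv ((Fam n a)^[m]) (z a)) 0 v) 0 := by
    have h1 : HasFDerivAt (fun a => deriv ((Fam n a)^[m]) (z a))
        (fderiv ℂ (fun a => deriv ((Fam n a)^[m]) (z a)) 0) ((fun t : ℂ => t • v) 0) := by
      rw [show (fun t : ℂ => t • v) 0 = 0 from h0v]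
      exact hΛdiff.hasFDerivAt
    exact h1.comp_hasDerivAt 0 hγ
  have hlineP : HasDerivAt (fun t : ℂ => deriv ((Fam n (t • v))^[m]) (z (t • v)))
      ((n:ℂ)^m * (Z m / z0) * c m / n) 0 := by
    apply (hℓ m).1.congr_of_eventuallyEq
    have htend : Filter.Tendsto (fun t : ℂ => t • v) (nhds 0) (nhds 0) := by
      have := hγ.continuousAt
      rwa [ContinuousAt, h0v] at this
    filter_upwards [htend.eventually hprod] with t ht
    exact ht
  have hmain := hlineF.unique hlineP
  rw [hmain]
  -- final algebra
  set S : ℂ := ∑ l ∈ range m, s l with hS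
  set UU : ℂ := ∑ l ∈ range m, T l with hUU
  have hrel : UU + T m - T 0 = (n:ℂ) * UU + S := by
    have h2 : ∑ l ∈ range m, T (l+1) = ∑ l ∈ range m, ((n:ℂ) * T l + s l) :=
      sum_congr rfl (fun l _ => by rw [hTsucc])
    have h3 : ∑ l ∈ range m, T (l+1) + T 0 = UU + T m := by
      rw [← Finset.sum_range_succ' T m, Finset.sum_range_succ T m]
    rw [h2] at h3
    rw [sum_add_distrib, ← mul_sum, ← hS, ← hUU] at h3
    linear_combination -h3
  have hrel2 : S = UU - (n:ℂ) * UU := by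
    rw [hTm, hT0] at hrel
    linear_combination -hrel
  have hcm : c m = (jn:ℂ) * S + (n:ℂ) * ((n:ℂ)-1) * UU := by
    simp only [hc, sum_add_distrib, ← mul_sum, ← hS, ← hUU]
  have hSmatch : S = ∑ i ∈ Finset.range m, z0 ^ ((n : ℤ) ^ i * ((pidx n (k : ℕ) : ℤ) - (n : ℤ))) := by
    rw [hS]
    apply sum_congr rfl
    intro i _
    simp only [hs, hZdef, ← hjn]
    rw [← zpow_natCast z0 (n ^ i), ← zpow_mul]
    congr 1
  rw [hZm, ← hSmatch, hcm]
  have hpow : (n:ℂ)^m = (n:ℂ)^(m-1) * n := by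
    rw [← pow_succ]; congr 1; omega
  rw [hpow]
  field_simp
  linear_combination (n:ℂ) * hrel2
end

section
/- Let n ≥ 2, m ≥ 1 and j ≥ 0 be integers, and let z_0 ∈ ℂ be a periodic point of minimal period m of the map f_0(w) = w^n with z_0 ≠ 0. For a ∈ ℂ define the polynomial map f_{a,j}(z) = z^n + a·z^j. Suppose z(·) is a holomorphic function on a neighborhood of 0 in ℂ such that z(0) = z_0 and f_{a,j}^{∘m}(z(a)) = z(a) for all a in that neighborhood, and let μ(a) denote the derivative of the m-th iterate f_{a,j}^{∘m} at the point z(a). Then μ'(0) = (j·n^{m−1} − n^m)·Σ_{i=0}^{m−1} z_0^{n^i(j−n)}, where the powers of the nonzero number z_0 are integer powers (possibly negative). -/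
open Finset
private lemma iter_pow (n : ℕ) : ∀ (k : ℕ) (w : ℂ), (fun w : ℂ => w ^ n)^[k] w = w ^ n ^ k := by
  intro k
  induction k with
  | zero => simp
  | succ k ih =>
    intro w
    rw [Function.iterate_succ_apply', ih, ← pow_mul, ← pow_succ]

private def fja (n j : ℕ) (a : ℂ) : ℂ → ℂ := fun w => w ^ n + a * w ^ j

private lemma fja_hasDerivAt (n j : ℕ) (a x : ℂ) :
    HasDerivAt (fja n j a) ((n : ℂ) * x ^ (n - 1) + a * ((j : ℂ) * x ^ (j - 1))) x :=
  (hasDerivAt_pow n x).add ((hasDerivAt_pow j x).const_mul a)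

private lemma fja_diff (n j : ℕ) (a : ℂ) : Differentiable ℂ (fja n j a) :=
  fun x => (fja_hasDerivAt n j a x).differentiableAt

private lemma iter_deriv (n j : ℕ) (a : ℂ) (k : ℕ) (x : ℂ) :
    deriv ((fja n j a)^[k]) x =
      ∏ i ∈ range k, ((n : ℂ) * ((fja n j a)^[i] x) ^ (n - 1)
        + a * ((j : ℂ) * ((fja n j a)^[i] x) ^ (j - 1))) := by
  induction k generalizing x with
  | zero => simp
  | succ k ih =>
    rw [Function.iterate_succ', prod_range_succ, ← ih x]
    rw [deriv_comp x (fja_diff n j a _)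
      ((fja_diff n j a).iterate k x)]
    rw [(fja_hasDerivAt n j a ((fja n j a)^[k] x)).deriv]
    ring


/-- Lemma 4.2 (Lemma 3.1 of [mult_n]): derivative of the multiplier of a periodic
orbit of `f_0(z) = z^n` in the one-parameter family `f_{a,j}(z) = z^n + a z^j`:
`μ'(0) = (j n^{m-1} - n^m) ∑_{i=0}^{m-1} z_0^{n^i (j-n)}`, the powers of the nonzero
number `z_0` being integer powers. -/
theorem multiplier_deriv_poly_family (n m j : ℕ) (hn : 2 ≤ n) (hm : 1 ≤ m)
    (z0 : ℂ) (hz0 : z0 ≠ 0)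
    (hper : (fun w : ℂ => w ^ n)^[m] z0 = z0)
    (hmin : ∀ r, 1 ≤ r → r < m → (fun w : ℂ => w ^ n)^[r] z0 ≠ z0)
    (U : Set ℂ) (hU : U ∈ nhds (0 : ℂ))
    (z : ℂ → ℂ) (hzhol : DifferentiableOn ℂ z U) (hz00 : z 0 = z0)
    (hfix : ∀ a ∈ U, (fun w : ℂ => w ^ n + a * w ^ j)^[m] (z a) = z a) :
    deriv (fun a => deriv ((fun w : ℂ => w ^ n + a * w ^ j)^[m]) (z a)) 0 =
      ((j : ℂ) * (n : ℂ) ^ (m - 1) - (n : ℂ) ^ m) *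
        ∑ i ∈ Finset.range m, z0 ^ ((n : ℤ) ^ i * ((j : ℤ) - (n : ℤ))) := by
  clear hmin
  have hn0 : (n : ℂ) ≠ 0 := Nat.cast_ne_zero.mpr (by omega)
  -- orbit values at a = 0
  set w : ℕ → ℂ := fun i => z0 ^ n ^ i with hwdef
  have hwne : ∀ i, w i ≠ 0 := fun i => pow_ne_zero _ hz0
  have hw0 : w 0 = z0 := by simp [hwdef]
  have hwsucc : ∀ i, w (i + 1) = (w i) ^ n := by
    intro i; simp only [hwdef]; rw [← pow_mul, ← pow_succ]
  have hperm : z0 ^ n ^ m = z0 := by rw [← iter_pow]; exact hper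
  have hwm : w m = z0 := hperm
  -- orbit functions
  set P : ℕ → ℂ → ℂ := fun i a => (fja n j a)^[i] (z a) with hPdef
  have hP0 : ∀ i, P i 0 = w i := by
    intro i
    have h : fja n j 0 = fun w : ℂ => w ^ n := by funext x; simp [fja]
    simp only [hPdef, h, hz00, iter_pow, hwdef]
  -- orbit derivatives at 0
  have hzd : HasDerivAt z (deriv z 0) 0 := (hzhol.differentiableAt hU).hasDerivAt
  set c : ℕ → ℂ := fun i =>
    Nat.rec (deriv z 0) (fun i ci => (n : ℂ) * (w i) ^ (n - 1) * ci + (w i) ^ j) i with hcdef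
  have hc0 : c 0 = deriv z 0 := rfl
  have hcs : ∀ i, c (i + 1) = (n : ℂ) * (w i) ^ (n - 1) * c i + (w i) ^ j := fun i => rfl
  have hPd : ∀ i, HasDerivAt (P i) (c i) 0 := by
    intro i
    induction i with
    | zero => exact hzd
    | succ i ih =>
      have h2 : P (i + 1) = fun a => (P i a) ^ n + a * (P i a) ^ j := by
        funext a
        simp only [hPdef, Function.iterate_succ_apply']
        rfl
      rw [h2, hcs]
      have h1 := (ih.fun_pow n).fun_add ((hasDerivAt_id 0).fun_mul (ih.fun_pow j))
      simp only [id_eq, zero_mul, mul_zero, one_mul, add_zero] at h1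
      rw [hP0 i] at h1
      exact h1
  -- c m = c 0
  have hcm : c m = c 0 := by
    have hev : P m =ᶠ[nhds 0] z := by
      filter_upwards [hU] with a ha
      exact hfix a ha
    exact ((hPd m).congr_of_eventuallyEq hev.symm).unique hzd
  -- the factors
  set φ : ℕ → ℂ → ℂ := fun i a =>
    (n : ℂ) * (P i a) ^ (n - 1) + a * ((j : ℂ) * (P i a) ^ (j - 1)) with hφdef
  set e : ℕ → ℂ := fun i =>
    (n : ℂ) * (((n : ℂ) - 1) * (w i) ^ (n - 2) * c i) + (j : ℂ) * (w i) ^ (j - 1) with hedef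
  have hφd : ∀ i, HasDerivAt (φ i) (e i) 0 := by
    intro i
    have h1 := (((hPd i).fun_pow (n - 1)).const_mul (n : ℂ)).fun_add
      ((hasDerivAt_id 0).fun_mul (((hPd i).fun_pow (j - 1)).const_mul (j : ℂ)))
    simp only [id_eq, zero_mul, mul_zero, one_mul, add_zero] at h1
    rw [hP0 i] at h1
    have hc1 : ((n - 1 : ℕ) : ℂ) = (n : ℂ) - 1 := by
      push_cast [Nat.cast_sub (show 1 ≤ n by omega)]; ring
    rw [hc1] at h1
    have hexp : n - 1 - 1 = n - 2 := by omega
    rw [hexp] at h1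
    exact h1
  have hφ0 : ∀ k, φ k 0 = (n : ℂ) * (w k) ^ (n - 1) := by
    intro k; simp [hφdef, hP0]
  -- rewrite the multiplier as a product
  have hμ : (fun a => deriv ((fun w : ℂ => w ^ n + a * w ^ j)^[m]) (z a))
      = fun a => ∏ i ∈ range m, φ i a := by
    funext a
    exact iter_deriv n j a m (z a)
  rw [hμ]
  have hprodd : HasDerivAt (fun a => ∏ i ∈ range m, φ i a)
      (∑ i ∈ range m, (∏ k ∈ (range m).erase i, φ k 0) • e i) 0 :=
    HasDerivAt.fun_finsetProd (fun i _ => hφd i)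
  rw [hprodd.deriv]
  -- powers of z0
  have hz1 : z0 ^ ((n : ℤ) ^ m - 1) = 1 := by
    rw [zpow_sub₀ hz0, zpow_one]
    have h : ((n : ℤ) ^ m) = ((n ^ m : ℕ) : ℤ) := by push_cast; ring
    rw [h, zpow_natCast, hperm, div_self hz0]
  have hPtot : ∏ k ∈ range m, ((n : ℂ) * (w k) ^ (n - 1)) = (n : ℂ) ^ m := by
    rw [Finset.prod_mul_distrib, Finset.prod_const, Finset.card_range]
    have h1 : ∏ k ∈ range m, (w k) ^ (n - 1) = ∏ k ∈ range m, z0 ^ (n ^ k * (n - 1)) := by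
      refine Finset.prod_congr rfl fun k _ => ?_
      rw [hwdef]; dsimp only; rw [← pow_mul]
    rw [h1, Finset.prod_pow_eq_pow_sum]
    have hE : ((∑ k ∈ range m, n ^ k * (n - 1) : ℕ) : ℤ) = (n : ℤ) ^ m - 1 := by
      push_cast [Nat.cast_sub (show 1 ≤ n by omega)]
      rw [← Finset.sum_mul, geom_sum_mul]
    have h2 : z0 ^ (∑ k ∈ range m, n ^ k * (n - 1)) = 1 := by
      have h3 := hz1
      rw [← hE, zpow_natCast] at h3
      exact h3
    rw [h2, mul_one]
  -- the quantities S i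
  set S : ℕ → ℂ := fun i => z0 ^ ((n : ℤ) ^ i * ((j : ℤ) - (n : ℤ))) with hSdef
  have hS : ∀ i, (w i) ^ ((j : ℤ) - (n : ℤ)) = S i := by
    intro i
    rw [hwdef, hSdef]; dsimp only
    rw [← zpow_natCast z0 (n ^ i), ← zpow_mul]
    congr 1
  clear_value S
  clear_value e
  clear_value φ
  clear_value c
  clear_value P
  clear_value w
  -- the quantities d i
  set d : ℕ → ℂ := fun i => c i * (w i)⁻¹ with hddef
  clear_value d
  have hdm : d m = d 0 := by rw [hddef]; dsimp only; rw [hcm, hwm, hw0]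
  have hdrec : ∀ i, d (i + 1) = (n : ℂ) * d i + S i := by
    intro i
    have hp : (w i) ^ (n - 1) * (w i) = (w i) ^ n := by
      rw [← pow_succ]; congr 1; omega
    rw [hddef]; dsimp only
    rw [hcs, hwsucc, ← hS, zpow_sub₀ (hwne i), zpow_natCast, zpow_natCast, ← hp]
    field_simp [hwne i]
  have htel : ∑ i ∈ range m, d (i + 1) + d 0 = ∑ i ∈ range m, d i + d m := by
    rw [← Finset.sum_range_succ', Finset.sum_range_succ]
  have hdsum : ((n : ℂ) - 1) * ∑ i ∈ range m, d i = -∑ i ∈ range m, S i := by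
    have h := Finset.sum_congr rfl (fun i (_ : i ∈ range m) => hdrec i)
    rw [Finset.sum_add_distrib, ← Finset.mul_sum] at h
    linear_combination (-1 : ℂ) * h + htel + hdm
  -- per-term computation
  have hnm : (n : ℂ) ^ m = (n : ℂ) ^ (m - 1) * n := by
    rw [← pow_succ]; congr 1; omega
  have hterm : ∀ i ∈ range m, (∏ k ∈ (range m).erase i, φ k 0) • e i
      = (n : ℂ) ^ (m - 1) * ((n : ℂ) * ((n : ℂ) - 1) * d i + (j : ℂ) * S i) := by
    intro i hi
    have hne : φ i 0 ≠ 0 := by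
      rw [hφ0]; exact mul_ne_zero hn0 (pow_ne_zero _ (hwne i))
    have htot : ∏ k ∈ range m, φ k 0 = (n : ℂ) ^ m := by
      rw [Finset.prod_congr rfl (fun k _ => hφ0 k)]; exact hPtot
    have h3 : (∏ k ∈ (range m).erase i, φ k 0) = (n : ℂ) ^ m / φ i 0 :=
      (eq_div_iff hne).mpr (by rw [Finset.prod_erase_mul _ _ hi, htot])
    rw [smul_eq_mul, h3, hφ0, hedef, hddef, ← hS i]
    dsimp only
    have hw1 : (w i) ^ (n - 1) = (w i) ^ (n - 2) * (w i) := by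
      rw [← pow_succ]; congr 1; omega
    rcases Nat.eq_zero_or_pos j with hj | hj
    · subst hj
      simp only [Nat.cast_zero, zero_mul, add_zero, mul_zero]
      rw [hnm, hw1]
      field_simp [hn0, hwne i]
    · have hzp : (w i) ^ ((j : ℤ) - (n : ℤ)) = (w i) ^ j / (w i) ^ n := by
        rw [zpow_sub₀ (hwne i), zpow_natCast, zpow_natCast]
      have hwj : (w i) ^ j = (w i) ^ (j - 1) * (w i) := by
        rw [← pow_succ]; congr 1; omega
      have hwn2 : (w i) ^ n = (w i) ^ (n - 2) * (w i) * (w i) := by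
        rw [mul_assoc, ← pow_two, ← pow_add]
        congr 1; omega
      rw [hzp, hnm, hw1, hwj, hwn2]
      field_simp [hn0, hwne i]
  rw [Finset.sum_congr rfl hterm]
  have hsplit : ∑ i ∈ range m, (n : ℂ) ^ (m - 1) *
        ((n : ℂ) * ((n : ℂ) - 1) * d i + (j : ℂ) * S i)
      = (n : ℂ) ^ (m - 1) * ((n : ℂ) * (((n : ℂ) - 1) * ∑ i ∈ range m, d i)
        + (j : ℂ) * ∑ i ∈ range m, S i) := by
    rw [← Finset.mul_sum, Finset.sum_add_distrib, ← Finset.mul_sum, ← Finset.mul_sum]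
    ring
  rw [hsplit, hdsum, hnm]
  ring
end

section
/- Let n ≥ 2, m ≥ 1 be integers and let j be an integer with n+1 ≤ j ≤ 2n−2. Then the polynomial P_{n,j,m} is a nonzero polynomial of degree (j−n+1)·n^{m−1}, and for every z_0 ∈ ℂ with z_0 ≠ 0 and z_0^{n^m} = z_0 one has (j·n^{m−1} − n^m)·Σ_{i=0}^{m−1} z_0^{n^i(j−n)} = z_0^{−n^{m−1}}·P_{n,j,m}(z_0). -/
/-- The polynomial `P_{n,j,m} ∈ ℂ[z]` from Proposition 4.3:
`P_{n,j,m}(z) = (j n^{m-1} - n^m)(z^{(j+1)n^{m-1}-1} + ∑_{i=0}^{m-2} z^{n^i(j-n)+n^{m-1}})`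
for `0 ≤ j ≤ n-2` (where `n^i(j-n) + n^{m-1} = n^{m-1} - n^i (n-j)` is a nonnegative
integer), `P_{n,j,m}(z) = (j n^{m-1} - n^m) ∑_{i=0}^{m-1} z^{n^i(j-n)+n^{m-1}}` for
`n+1 ≤ j ≤ 2n-2`, and
`P_{n,j,m}(z) = (j n^{m-1} - n^m)(z + ∑_{i=0}^{m-2} z^{n^i(n-1)+n^{m-1}})` for `j = 2n-1`. -/
noncomputable def P (n j m : ℕ) : Polynomial ℂ :=
  Polynomial.C ((j : ℂ) * (n : ℂ) ^ (m - 1) - (n : ℂ) ^ m) *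
    (if j ≤ n - 2 then
      Polynomial.X ^ ((j + 1) * n ^ (m - 1) - 1) +
        ∑ i ∈ Finset.range (m - 1), Polynomial.X ^ (n ^ (m - 1) - n ^ i * (n - j))
    else if j ≤ 2 * n - 2 then
      ∑ i ∈ Finset.range m, Polynomial.X ^ (n ^ i * (j - n) + n ^ (m - 1))
    else
      Polynomial.X +
        ∑ i ∈ Finset.range (m - 1), Polynomial.X ^ (n ^ i * (n - 1) + n ^ (m - 1)))

/-- Proposition 4.3, case `n+1 ≤ j ≤ 2n-2`: `P_{n,j,m}` is a nonzero polynomial of degree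
`(j-n+1) n^{m-1}`, and for every nonzero `z_0` with `z_0^{n^m} = z_0`,
`(j n^{m-1} - n^m) ∑_{i=0}^{m-1} z_0^{n^i(j-n)} = z_0^{-n^{m-1}} P_{n,j,m}(z_0)`. -/
theorem P_mid_degree_and_eval (n m j : ℕ) (hn : 2 ≤ n) (hm : 1 ≤ m)
    (hj1 : n + 1 ≤ j) (hj2 : j ≤ 2 * n - 2) :
    P n j m ≠ 0 ∧ (P n j m).natDegree = (j - n + 1) * n ^ (m - 1) ∧
    ∀ z0 : ℂ, z0 ≠ 0 → z0 ^ (n ^ m) = z0 →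
      ((j : ℂ) * (n : ℂ) ^ (m - 1) - (n : ℂ) ^ m) *
          ∑ i ∈ Finset.range m, z0 ^ ((n : ℤ) ^ i * ((j : ℤ) - (n : ℤ))) =
        z0 ^ (-((n : ℤ) ^ (m - 1))) * (P n j m).eval z0 := by
  have hjn : n < j := by omega
  have hne : ¬ j ≤ n - 2 := by omega
  have hP : P n j m = Polynomial.C ((j:ℂ)*(n:ℂ)^(m-1) - (n:ℂ)^m) *
      ∑ i ∈ Finset.range m, Polynomial.X ^ (n ^ i * (j - n) + n ^ (m - 1)) := by
    simp [P, hne, hj2]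
  have hnm : (n:ℂ)^m = (n:ℂ) * (n:ℂ)^(m-1) := by
    conv_lhs => rw [show m = (m-1)+1 by omega]
    ring
  have hc : ((j:ℂ)*(n:ℂ)^(m-1) - (n:ℂ)^m) ≠ 0 := by
    have h1 : ((j:ℂ)*(n:ℂ)^(m-1) - (n:ℂ)^m) = (((j - n : ℕ) : ℂ)) * (n:ℂ)^(m-1) := by
      rw [hnm, Nat.cast_sub hjn.le]; ring
    rw [h1]
    exact mul_ne_zero (Nat.cast_ne_zero.mpr (by omega))
      (pow_ne_zero _ (Nat.cast_ne_zero.mpr (by omega)))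
  set D := (j - n + 1) * n ^ (m - 1) with hD
  have heD : ∀ i, i < m → (n ^ i * (j - n) + n ^ (m - 1) = D ↔ i = m - 1) := by
    intro i hi
    constructor
    · intro h
      by_contra hne'
      have hilt : i < m - 1 := by omega
      have h1 : n ^ i < n ^ (m-1) := Nat.pow_lt_pow_right (by omega) hilt
      have h2 : n ^ i * (j - n) < n ^ (m-1) * (j - n) :=
        (Nat.mul_lt_mul_right (by omega : 0 < j - n)).mpr h1
      have : D = n ^ (m-1) * (j - n) + n ^ (m-1) := by rw [hD]; ring
      omega
    · intro h; subst h; rw [hD]; ring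
  have hQcoeff : (∑ i ∈ Finset.range m,
      (Polynomial.X : Polynomial ℂ) ^ (n ^ i * (j - n) + n ^ (m - 1))).coeff D = 1 := by
    rw [Polynomial.finset_sum_coeff]
    simp only [Polynomial.coeff_X_pow]
    rw [Finset.sum_eq_single (m-1)]
    · simp [(heD (m-1) (by omega)).mpr rfl]
    · intro i hi hne'
      have : ¬ (n ^ i * (j - n) + n ^ (m - 1) = D) := by
        rw [heD i (Finset.mem_range.mp hi)]; exact hne'
      exact if_neg (fun h => this h.symm)
    · intro h; exact absurd (Finset.mem_range.mpr (by omega)) h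
  have hQle : (∑ i ∈ Finset.range m,
      (Polynomial.X : Polynomial ℂ) ^ (n ^ i * (j - n) + n ^ (m - 1))).natDegree ≤ D := by
    apply Polynomial.natDegree_sum_le_of_forall_le
    intro i hi
    have him : i < m := Finset.mem_range.mp hi
    rw [Polynomial.natDegree_X_pow]
    have h1 : n ^ i ≤ n ^ (m-1) :=
      Nat.pow_le_pow_right (by omega) (by omega)
    have h2 : n ^ i * (j - n) ≤ n ^ (m-1) * (j - n) := Nat.mul_le_mul_right _ h1
    have : D = n ^ (m-1) * (j - n) + n ^ (m-1) := by rw [hD]; ring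
    omega
  have hQne : (∑ i ∈ Finset.range m,
      (Polynomial.X : Polynomial ℂ) ^ (n ^ i * (j - n) + n ^ (m - 1))) ≠ 0 := by
    intro h
    rw [h] at hQcoeff; simp at hQcoeff
  have hQdeg : (∑ i ∈ Finset.range m,
      (Polynomial.X : Polynomial ℂ) ^ (n ^ i * (j - n) + n ^ (m - 1))).natDegree = D :=
    le_antisymm hQle (Polynomial.le_natDegree_of_ne_zero (by rw [hQcoeff]; exact one_ne_zero))
  refine ⟨?_, ?_, ?_⟩
  · rw [hP]
    exact mul_ne_zero (Polynomial.C_ne_zero.mpr hc) hQne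
  · rw [hP, Polynomial.natDegree_C_mul hc, hQdeg]
  · intro z0 hz0 _
    rw [hP, Polynomial.eval_mul, Polynomial.eval_C, Polynomial.eval_finset_sum,
      mul_left_comm]
    congr 1
    simp only [Polynomial.eval_pow, Polynomial.eval_X]
    rw [Finset.mul_sum]
    refine Finset.sum_congr rfl (fun i hi => ?_)
    rw [← zpow_natCast z0 (n ^ i * (j - n) + n ^ (m - 1)), ← zpow_add₀ hz0]
    congr 1
    push_cast [Nat.cast_sub hjn.le]
    ring
end

section
/- Let n ≥ 2, m ≥ 1 be integers and let j = 2n−1. Then the polynomial P_{n,j,m} is a nonzero polynomial whose degree equals 1 if m = 1 and equals 2·n^{m−1} − n^{m−2} if m ≥ 2, and for every z_0 ∈ ℂ with z_0 ≠ 0 and z_0^{n^m} = z_0 one has (j·n^{m−1} − n^m)·Σ_{i=0}^{m−1} z_0^{n^i(j−n)} = z_0^{−n^{m−1}}·P_{n,j,m}(z_0). -/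
/-- Proposition 4.3, case `j = 2n-1`: `P_{n,2n-1,m}` is a nonzero polynomial whose degree
is `1` if `m = 1` and `2 n^{m-1} - n^{m-2}` if `m ≥ 2`, and for every nonzero `z_0` with
`z_0^{n^m} = z_0`,
`(j n^{m-1} - n^m) ∑_{i=0}^{m-1} z_0^{n^i(j-n)} = z_0^{-n^{m-1}} P_{n,j,m}(z_0)`. -/
theorem P_top_degree_and_eval (n m : ℕ) (hn : 2 ≤ n) (hm : 1 ≤ m) :
    P n (2 * n - 1) m ≠ 0 ∧
    (P n (2 * n - 1) m).natDegree =
      (if m = 1 then 1 else 2 * n ^ (m - 1) - n ^ (m - 2)) ∧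
    ∀ z0 : ℂ, z0 ≠ 0 → z0 ^ (n ^ m) = z0 →
      (((2 * n - 1 : ℕ) : ℂ) * (n : ℂ) ^ (m - 1) - (n : ℂ) ^ m) *
          ∑ i ∈ Finset.range m, z0 ^ ((n : ℤ) ^ i * (((2 * n - 1 : ℕ) : ℤ) - (n : ℤ))) =
        z0 ^ (-((n : ℤ) ^ (m - 1))) * (P n (2 * n - 1) m).eval z0 := by
  have h1 : ¬ (2 * n - 1 ≤ n - 2) := by omega
  have h2 : ¬ (2 * n - 1 ≤ 2 * n - 2) := by omega
  set c : ℂ := ((2 * n - 1 : ℕ) : ℂ) * (n : ℂ) ^ (m - 1) - (n : ℂ) ^ m with hc_def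
  set Q : Polynomial ℂ :=
    Polynomial.X + ∑ i ∈ Finset.range (m - 1),
      Polynomial.X ^ (n ^ i * (n - 1) + n ^ (m - 1)) with hQ_def
  have hP : P n (2 * n - 1) m = Polynomial.C c * Q := by
    rw [P, if_neg h1, if_neg h2]
  have hcast : ((2 * n - 1 : ℕ) : ℂ) = 2 * (n : ℂ) - 1 := by
    push_cast [Nat.cast_sub (by omega : 1 ≤ 2 * n)]; ring
  have hpow : (n : ℂ) ^ m = (n : ℂ) ^ (m - 1) * n := by
    rw [← pow_succ]; congr 1; omega
  have hcval : c = ((n : ℂ) - 1) * (n : ℂ) ^ (m - 1) := by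
    rw [hc_def, hcast, hpow]; ring
  have hn1 : (n : ℂ) - 1 ≠ 0 := by
    have : (n : ℂ) ≠ 1 := by exact_mod_cast (by omega : n ≠ 1)
    exact sub_ne_zero.mpr this
  have hncast : (n : ℂ) ≠ 0 := by exact_mod_cast (by omega : n ≠ 0)
  have hc0 : c ≠ 0 := by
    rw [hcval]; exact mul_ne_zero hn1 (pow_ne_zero _ hncast)
  -- degree computation
  have hdeg : Q.natDegree = if m = 1 then 1 else 2 * n ^ (m - 1) - n ^ (m - 2) := by
    rcases eq_or_lt_of_le hm with h | h
    · simp [hQ_def, ← h]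
    · have hm2 : 2 ≤ m := h
      rw [if_neg (by omega)]
      have hk : m - 1 = (m - 2) + 1 := by omega
      have hlast : n ^ (m - 2) * (n - 1) + n ^ (m - 1) = 2 * n ^ (m - 1) - n ^ (m - 2) := by
        have h3 : n ^ (m - 2) * n = n ^ (m - 1) := by
          rw [← pow_succ]; congr 1; omega
        have h4 : n ^ (m - 2) * (n - 1) + n ^ (m - 2) = n ^ (m - 2) * n :=
          calc n ^ (m - 2) * (n - 1) + n ^ (m - 2) = n ^ (m - 2) * ((n - 1) + 1) := by ring
            _ = n ^ (m - 2) * n := by rw [(by omega : (n - 1) + 1 = n)]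
        omega
      have hsr : ∑ i ∈ Finset.range (m - 1),
          (Polynomial.X : Polynomial ℂ) ^ (n ^ i * (n - 1) + n ^ (m - 1)) =
          ∑ i ∈ Finset.range (m - 2), (Polynomial.X : Polynomial ℂ) ^ (n ^ i * (n - 1) + n ^ (m - 1))
            + Polynomial.X ^ (n ^ (m - 2) * (n - 1) + n ^ (m - 1)) := by
        rw [hk, Finset.sum_range_succ]
      rw [hQ_def, hsr, ← add_assoc]
      rw [Polynomial.natDegree_add_eq_right_of_natDegree_lt, Polynomial.natDegree_X_pow, hlast]
      rw [Polynomial.natDegree_X_pow]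
      have hb : n ^ (m - 2) * (n - 1) + n ^ (m - 1) ≥ 2 := by
        have e1 : 1 ≤ n ^ (m - 2) * (n - 1) :=
          Nat.one_le_iff_ne_zero.mpr (Nat.mul_ne_zero (by positivity) (by omega))
        have e2 : 1 ≤ n ^ (m - 1) := Nat.one_le_iff_ne_zero.mpr (by positivity)
        omega
      apply lt_of_le_of_lt (Polynomial.natDegree_add_le _ _)
      rw [Polynomial.natDegree_X]
      apply max_lt (by omega)
      refine lt_of_le_of_lt (b := n ^ (m - 2) * (n - 1) + n ^ (m - 1) - 1)
        (Polynomial.natDegree_sum_le_of_forall_le _ _ (fun i hi => ?_)) (by omega)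
      rw [Polynomial.natDegree_X_pow]
      have hi' : i < m - 2 := Finset.mem_range.mp hi
      have h6 := Nat.pow_lt_pow_right (by omega : 1 < n) hi'
      have h7 : n ^ i * (n - 1) < n ^ (m - 2) * (n - 1) :=
        (Nat.mul_lt_mul_right (by omega : 0 < n - 1)).mpr h6
      omega
  have hQ0 : Q ≠ 0 := by
    intro hQz
    have : Q.natDegree = 0 := by rw [hQz]; simp
    rw [hdeg] at this
    have hge : 1 ≤ n ^ (m - 1) := Nat.one_le_iff_ne_zero.mpr (by positivity)
    have hge2 : (n ^ (m - 2) < n ^ (m - 1) ∧ m ≠ 1) ∨ m = 1 := by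
      rcases Nat.eq_or_lt_of_le hm with h | h
      · right; omega
      · exact Or.inl ⟨Nat.pow_lt_pow_right (by omega) (by omega), by omega⟩
    rcases hge2 with ⟨h, h'⟩ | h
    · rw [if_neg h'] at this; omega
    · rw [if_pos h] at this; omega
  refine ⟨?_, ?_, ?_⟩
  · rw [hP]
    exact mul_ne_zero (by simpa using hc0) hQ0
  · rw [hP, Polynomial.natDegree_C_mul hc0, hdeg]
  · intro z0 hz0 hzfix
    have hNcast : (-((n : ℤ) ^ (m - 1))) = -((n ^ (m - 1) : ℕ) : ℤ) := by push_cast; ring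
    rw [hNcast, zpow_neg, zpow_natCast, hP]
    have hexp : ∀ i : ℕ, (n : ℤ) ^ i * (((2 * n - 1 : ℕ) : ℤ) - (n : ℤ)) =
        ((n ^ i * (n - 1) : ℕ) : ℤ) := by
      intro i
      push_cast [Nat.cast_sub (by omega : 1 ≤ 2 * n), Nat.cast_sub (by omega : 1 ≤ n)]
      ring
    have hsum : ∑ i ∈ Finset.range m, z0 ^ ((n : ℤ) ^ i * (((2 * n - 1 : ℕ) : ℤ) - (n : ℤ))) =
        ∑ i ∈ Finset.range m, z0 ^ (n ^ i * (n - 1)) := by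
      refine Finset.sum_congr rfl fun i _ => ?_
      rw [hexp i, zpow_natCast]
    rw [hsum]
    have hzN : z0 ^ (n ^ (m - 1)) ≠ 0 := pow_ne_zero _ hz0
    have hevalQ : Polynomial.eval z0 (Polynomial.C c * Q) =
        c * (z0 + ∑ i ∈ Finset.range (m - 1), z0 ^ (n ^ i * (n - 1) + n ^ (m - 1))) := by
      simp [hQ_def, Polynomial.eval_finset_sum]
    rw [hevalQ, eq_comm, inv_mul_eq_iff_eq_mul₀ hzN]
    have hm' : m = (m - 1) + 1 := by omega
    have hsplit : ∑ i ∈ Finset.range m, z0 ^ (n ^ i * (n - 1)) =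
        (∑ i ∈ Finset.range (m - 1), z0 ^ (n ^ i * (n - 1))) + z0 ^ (n ^ (m - 1) * (n - 1)) := by
      conv_lhs => rw [hm']
      rw [Finset.sum_range_succ]
    have hnm : n ^ (m - 1) * (n - 1) + n ^ (m - 1) = n ^ m := by
      have e1 : n ^ (m - 1) * (n - 1) + n ^ (m - 1) = n ^ (m - 1) * ((n - 1) + 1) := by ring
      rw [e1, (by omega : (n - 1) + 1 = n), ← pow_succ]
      congr 1; omega
    have hlastpow : z0 ^ (n ^ (m - 1) * (n - 1)) * z0 ^ (n ^ (m - 1)) = z0 := by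
      rw [← pow_add, hnm, hzfix]
    have hS : ∑ i ∈ Finset.range (m - 1), z0 ^ (n ^ i * (n - 1)) * z0 ^ (n ^ (m - 1)) =
        ∑ i ∈ Finset.range (m - 1), z0 ^ (n ^ i * (n - 1) + n ^ (m - 1)) :=
      Finset.sum_congr rfl fun i _ => by rw [← pow_add]
    rw [hsplit]
    refine Eq.symm ?_
    calc z0 ^ (n ^ (m - 1)) *
          (c * ((∑ i ∈ Finset.range (m - 1), z0 ^ (n ^ i * (n - 1))) + z0 ^ (n ^ (m - 1) * (n - 1))))
        = c * ((∑ i ∈ Finset.range (m - 1), z0 ^ (n ^ i * (n - 1)) * z0 ^ (n ^ (m - 1))) +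
            z0 ^ (n ^ (m - 1) * (n - 1)) * z0 ^ (n ^ (m - 1))) := by
          rw [← Finset.sum_mul]; ring
      _ = c * (z0 + ∑ i ∈ Finset.range (m - 1), z0 ^ (n ^ i * (n - 1) + n ^ (m - 1))) := by
          rw [hS, hlastpow]; ring
end

section
/- Let n ≥ 2 and m ≥ 2 be integers, and let j_1, j_2 be integers with 0 ≤ j_1 < j_2 ≤ 2n−2 and j_1, j_2 ∉ {n−1, n}. Then the polynomials P_{n,j_1,m} and P_{n,j_2,m} have no monomial terms of the same degree; that is, their supports are disjoint. -/
/-- Key cancellation lemma: `n^{i1} a ≠ n^{i2} b` when `a < b < n a`. -/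
lemma aux_pow_mul_ne (n a b i1 i2 : ℕ) (hn : 2 ≤ n) (hab : a < b) (hb : b < n * a) :
    n ^ i1 * a ≠ n ^ i2 * b := by
  intro h
  rcases le_or_gt i1 i2 with hle | hlt
  · have h1 : n ^ i1 * b ≤ n ^ i2 * b :=
      Nat.mul_le_mul_right b (Nat.pow_le_pow_right (by omega) hle)
    have h2 : n ^ i1 * a < n ^ i1 * b :=
      (Nat.mul_lt_mul_left (Nat.pow_pos (by omega) : 0 < n ^ i1)).mpr hab
    omega
  · have h1 : n ^ i2 * (n ^ (i1 - i2) * a) = n ^ i2 * b := by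
      rw [← Nat.mul_assoc, ← Nat.pow_add]
      rw [show i2 + (i1 - i2) = i1 by omega]
      exact h
    have h2 : n ^ (i1 - i2) * a = b :=
      Nat.eq_of_mul_eq_mul_left (Nat.pow_pos (by omega) : 0 < n ^ i2) h1
    have h3 : n ≤ n ^ (i1 - i2) := by
      calc n = n ^ 1 := (pow_one n).symm
        _ ≤ n ^ (i1 - i2) := Nat.pow_le_pow_right (by omega) (by omega)
    have h4 : n * a ≤ n ^ (i1 - i2) * a := Nat.mul_le_mul_right a h3
    omega

lemma aux_support_low (n j m : ℕ) (hj : j ≤ n - 2) {k : ℕ}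
    (hk : k ∈ (P n j m).support) :
    k = (j + 1) * n ^ (m - 1) - 1 ∨ ∃ i < m - 1, k = n ^ (m - 1) - n ^ i * (n - j) := by
  rw [P, if_pos hj, Polynomial.mem_support_iff, Polynomial.coeff_C_mul, Polynomial.coeff_add,
    Polynomial.coeff_X_pow, Polynomial.finset_sum_coeff] at hk
  simp only [Polynomial.coeff_X_pow] at hk
  by_contra hcon
  push_neg at hcon
  apply hk
  rw [if_neg hcon.1, zero_add, Finset.sum_eq_zero, mul_zero]
  intro i hi
  exact if_neg (hcon.2 i (Finset.mem_range.mp hi))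

lemma aux_support_high (n j m : ℕ) (hj1 : ¬ j ≤ n - 2) (hj2 : j ≤ 2 * n - 2) {k : ℕ}
    (hk : k ∈ (P n j m).support) :
    ∃ i < m, k = n ^ i * (j - n) + n ^ (m - 1) := by
  rw [P, if_neg hj1, if_pos hj2, Polynomial.mem_support_iff, Polynomial.coeff_C_mul,
    Polynomial.finset_sum_coeff] at hk
  simp only [Polynomial.coeff_X_pow] at hk
  by_contra hcon
  push_neg at hcon
  apply hk
  rw [Finset.sum_eq_zero, mul_zero]
  intro i hi
  exact if_neg (hcon i (Finset.mem_range.mp hi))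

/-- `n^i * c ≤ n^(m-1)` when `c ≤ n` and `i < m - 1`. -/
lemma aux_le (n i m c : ℕ) (hn : 1 ≤ n) (hc : c ≤ n) (hi : i < m - 1) :
    n ^ i * c ≤ n ^ (m - 1) := by
  calc n ^ i * c ≤ n ^ i * n := Nat.mul_le_mul_left _ hc
    _ = n ^ (i + 1) := (pow_succ n i).symm
    _ ≤ n ^ (m - 1) := Nat.pow_le_pow_right hn (by omega)

/-- Proposition 4.3, property (b): for `m ≥ 2` and `0 ≤ j₁ < j₂ ≤ 2n-2` with
`j₁, j₂ ∉ {n-1, n}`, the polynomials `P_{n,j₁,m}` and `P_{n,j₂,m}` have no monomial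
terms of the same degree, i.e. their supports are disjoint. -/
theorem P_supports_disjoint_mid (n m j1 j2 : ℕ) (hn : 2 ≤ n) (hm : 2 ≤ m)
    (h12 : j1 < j2) (hj2 : j2 ≤ 2 * n - 2)
    (hj1n : j1 ≠ n - 1) (hj1n' : j1 ≠ n) (hj2n : j2 ≠ n - 1) (hj2n' : j2 ≠ n) :
    Disjoint (P n j1 m).support (P n j2 m).support := by
  have hq : n ≤ n ^ (m - 1) := by
    calc n = n ^ 1 := (pow_one n).symm
      _ ≤ n ^ (m - 1) := Nat.pow_le_pow_right (by omega) (by omega)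
  have hdvd : n ∣ n ^ (m - 1) := dvd_pow_self n (by omega)
  have hpow : ∀ i : ℕ, 1 ≤ n ^ i := fun i => (Nat.pow_pos (by omega) : 0 < n ^ i)
  rw [Finset.disjoint_left]
  intro k h1 h2
  have hc1 : j1 ≤ n - 2 ∨ n + 1 ≤ j1 := by omega
  rcases hc1 with hl1 | hh1
  · have hc2 : j2 ≤ n - 2 ∨ n + 1 ≤ j2 := by omega
    rcases hc2 with hl2 | hh2
    · -- both low
      rcases aux_support_low n j1 m hl1 h1 with he1 | ⟨i1, hi1, hs1⟩ <;>
        rcases aux_support_low n j2 m hl2 h2 with he2 | ⟨i2, hi2, hs2⟩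
      · have hlt : (j1 + 1) * n ^ (m - 1) < (j2 + 1) * n ^ (m - 1) :=
          (Nat.mul_lt_mul_right (hpow (m - 1))).mpr (by omega)
        have hge : n ^ (m - 1) ≤ (j1 + 1) * n ^ (m - 1) :=
          Nat.le_mul_of_pos_left _ (by omega)
        omega
      · have hge : n ^ (m - 1) ≤ (j1 + 1) * n ^ (m - 1) :=
          Nat.le_mul_of_pos_left _ (by omega)
        have hx2a : 1 * (n - j2) ≤ n ^ i2 * (n - j2) := Nat.mul_le_mul_right _ (hpow i2)
        have hx2b : n ^ i2 * (n - j2) ≤ n ^ (m - 1) :=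
          aux_le n i2 m (n - j2) (by omega) (by omega) hi2
        omega
      · have h2q : 2 * n ^ (m - 1) ≤ (j2 + 1) * n ^ (m - 1) :=
          Nat.mul_le_mul_right _ (by omega)
        have hx1a : 1 * (n - j1) ≤ n ^ i1 * (n - j1) := Nat.mul_le_mul_right _ (hpow i1)
        have hx1b : n ^ i1 * (n - j1) ≤ n ^ (m - 1) :=
          aux_le n i1 m (n - j1) (by omega) (by omega) hi1
        omega
      · have hx1b : n ^ i1 * (n - j1) ≤ n ^ (m - 1) :=
          aux_le n i1 m (n - j1) (by omega) (by omega) hi1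
        have hx2b : n ^ i2 * (n - j2) ≤ n ^ (m - 1) :=
          aux_le n i2 m (n - j2) (by omega) (by omega) hi2
        have heq : n ^ i2 * (n - j2) = n ^ i1 * (n - j1) := by omega
        refine aux_pow_mul_ne n (n - j2) (n - j1) i2 i1 hn (by omega) ?_ heq
        have hna : n * 2 ≤ n * (n - j2) := Nat.mul_le_mul_left n (by omega)
        omega
    · -- j1 low, j2 high
      rcases aux_support_low n j1 m hl1 h1 with he1 | ⟨i1, hi1, hs1⟩ <;>
        rcases aux_support_high n j2 m (by omega) hj2 h2 with ⟨i2, hi2, hb2⟩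
      · -- e1 = b2 : divisibility contradiction mod n
        have hA : n ∣ (j1 + 1) * n ^ (m - 1) := Dvd.dvd.mul_left hdvd _
        have hge : n ^ (m - 1) ≤ (j1 + 1) * n ^ (m - 1) :=
          Nat.le_mul_of_pos_left _ (by omega)
        have h5 : (j1 + 1) * n ^ (m - 1) - n ^ (m - 1) = n ^ i2 * (j2 - n) + 1 := by omega
        have hd : n ∣ n ^ i2 * (j2 - n) + 1 := h5 ▸ Nat.dvd_sub hA hdvd
        rcases Nat.eq_zero_or_pos i2 with hz | hp
        · rw [hz, pow_zero, one_mul] at hd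
          have := Nat.le_of_dvd (by omega) hd
          omega
        · have hd2 : n ∣ n ^ i2 * (j2 - n) :=
            Dvd.dvd.mul_right (dvd_pow_self n (by omega)) _
          have h6 : n ∣ 1 := (Nat.dvd_add_right hd2).mp hd
          have := Nat.le_of_dvd (by omega) h6
          omega
      · have hx1a : 1 * (n - j1) ≤ n ^ i1 * (n - j1) := Nat.mul_le_mul_right _ (hpow i1)
        have hy : 1 * (j2 - n) ≤ n ^ i2 * (j2 - n) := Nat.mul_le_mul_right _ (hpow i2)
        have hx1b : n ^ i1 * (n - j1) ≤ n ^ (m - 1) :=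
          aux_le n i1 m (n - j1) (by omega) (by omega) hi1
        omega
  · -- both high
    have hh2 : n + 1 ≤ j2 := by omega
    rcases aux_support_high n j1 m (by omega) (by omega) h1 with ⟨i1, hi1, hb1⟩
    rcases aux_support_high n j2 m (by omega) hj2 h2 with ⟨i2, hi2, hb2⟩
    have heq : n ^ i1 * (j1 - n) = n ^ i2 * (j2 - n) := by omega
    refine aux_pow_mul_ne n (j1 - n) (j2 - n) i1 i2 hn (by omega) ?_ heq
    have h1n : n * 1 ≤ n * (j1 - n) := Nat.mul_le_mul_left n (by omega)
    omega
end

section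
/- Let n ≥ 2 and m ≥ 3 be integers, and let j_1, j_2 be integers with 0 ≤ j_1 < j_2 ≤ 2n−1 and j_1, j_2 ∉ {n−1, n}. Then the polynomials P_{n,j_1,m} and P_{n,j_2,m} have no monomial terms of the same degree; that is, their supports are disjoint. -/
section Aux

open Polynomial

private lemma supp_C_mul {c : ℂ} {p : Polynomial ℂ} {k : ℕ}
    (h : k ∈ (Polynomial.C c * p).support) : k ∈ p.support := by
  rw [Polynomial.mem_support_iff] at h ⊢
  intro h0
  exact h (by rw [Polynomial.coeff_C_mul, h0, mul_zero])

private lemma supp_X_pow {a k : ℕ} (h : k ∈ ((Polynomial.X : Polynomial ℂ) ^ a).support) :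
    k = a := by
  rw [Polynomial.mem_support_iff, Polynomial.coeff_X_pow] at h
  by_contra h'
  simp [h'] at h

private lemma supp_sum {t : ℕ} {e : ℕ → ℕ} {k : ℕ}
    (h : k ∈ (∑ i ∈ Finset.range t, (Polynomial.X : Polynomial ℂ) ^ (e i)).support) :
    ∃ i < t, k = e i := by
  rw [Polynomial.mem_support_iff, Polynomial.finset_sum_coeff] at h
  obtain ⟨i, hi, hne⟩ := Finset.exists_ne_zero_of_sum_ne_zero h
  rw [Polynomial.coeff_X_pow] at hne
  refine ⟨i, Finset.mem_range.mp hi, ?_⟩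
  by_contra h'
  simp [h'] at hne

/-- key cancellation lemma: if neither side can absorb a factor of `n`, the
powers and the cofactors agree. -/
private lemma key {n i k a b : ℕ} (hn : 2 ≤ n) (hab : a < n * b) (hba : b < n * a)
    (h : n ^ i * a = n ^ k * b) : a = b := by
  rcases lt_trichotomy i k with h' | h' | h'
  · have hk : n ^ k = n ^ i * n ^ (k - i) := by
      rw [← pow_add]; congr 1; omega
    rw [hk, mul_assoc] at h
    have ha : a = n ^ (k - i) * b :=
      Nat.eq_of_mul_eq_mul_left (Nat.pow_pos (by omega)) h
    have h1 : n ≤ n ^ (k - i) := by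
      calc n = n ^ 1 := (pow_one n).symm
        _ ≤ n ^ (k - i) := Nat.pow_le_pow_right (by omega) (by omega)
    have h2 : n * b ≤ n ^ (k - i) * b := Nat.mul_le_mul_right b h1
    omega
  · subst h'
    exact Nat.eq_of_mul_eq_mul_left (Nat.pow_pos (by omega)) h
  · have hk : n ^ i = n ^ k * n ^ (i - k) := by
      rw [← pow_add]; congr 1; omega
    rw [hk, mul_assoc] at h
    have hb : n ^ (i - k) * a = b :=
      (Nat.eq_of_mul_eq_mul_left (Nat.pow_pos (by omega)) h)
    have h1 : n ≤ n ^ (i - k) := by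
      calc n = n ^ 1 := (pow_one n).symm
        _ ≤ n ^ (i - k) := Nat.pow_le_pow_right (by omega) (by omega)
    have h2 : n * a ≤ n ^ (i - k) * a := Nat.mul_le_mul_right a h1
    omega

end Aux

/-- every element of the support of `P n j m` is one of the listed exponents. -/
private lemma support_classify (n j m k : ℕ) (hk : k ∈ (P n j m).support) :
    (j ≤ n - 2 ∧ (k = (j + 1) * n ^ (m - 1) - 1 ∨
        ∃ i < m - 1, k = n ^ (m - 1) - n ^ i * (n - j)))
    ∨ (¬ j ≤ n - 2 ∧ j ≤ 2 * n - 2 ∧ ∃ i < m, k = n ^ i * (j - n) + n ^ (m - 1))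
    ∨ (¬ j ≤ 2 * n - 2 ∧ (k = 1 ∨ ∃ i < m - 1, k = n ^ i * (n - 1) + n ^ (m - 1))) := by
  unfold P at hk
  split_ifs at hk with h1 h2
  · refine Or.inl ⟨h1, ?_⟩
    have hk' := supp_C_mul hk
    rcases Finset.mem_union.mp (Polynomial.support_add hk') with h | h
    · exact Or.inl (supp_X_pow h)
    · exact Or.inr (supp_sum h)
  · refine Or.inr (Or.inl ⟨h1, h2, ?_⟩)
    exact supp_sum (supp_C_mul hk)
  · refine Or.inr (Or.inr ⟨h2, ?_⟩)
    have hk' := supp_C_mul hk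
    rcases Finset.mem_union.mp (Polynomial.support_add hk') with h | h
    · left
      have h' : k ∈ ((Polynomial.X : Polynomial ℂ) ^ 1).support := by
        rwa [pow_one]
      exact supp_X_pow h'
    · exact Or.inr (supp_sum h)

/-- Proposition 4.3, property (c): for `m ≥ 3` and `0 ≤ j₁ < j₂ ≤ 2n-1` with
`j₁, j₂ ∉ {n-1, n}`, the polynomials `P_{n,j₁,m}` and `P_{n,j₂,m}` have no monomial
terms of the same degree, i.e. their supports are disjoint. -/
theorem P_supports_disjoint_top (n m j1 j2 : ℕ) (hn : 2 ≤ n) (hm : 3 ≤ m)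
    (h12 : j1 < j2) (hj2 : j2 ≤ 2 * n - 1)
    (hj1n : j1 ≠ n - 1) (hj1n' : j1 ≠ n) (hj2n : j2 ≠ n - 1) (hj2n' : j2 ≠ n) :
    Disjoint (P n j1 m).support (P n j2 m).support := by
  rw [Finset.disjoint_left]
  intro k hk1 hk2
  have c1 := support_classify n j1 m k hk1
  have c2 := support_classify n j2 m k hk2
  clear hk1 hk2
  -- basic facts about N = n ^ (m - 1)
  have hNpos : 0 < n ^ (m - 1) := Nat.pow_pos (by omega)
  have hNsq : n * n ≤ n ^ (m - 1) := by
    calc n * n = n ^ 2 := (sq n).symm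
      _ ≤ n ^ (m - 1) := Nat.pow_le_pow_right (by omega) (by omega)
  have hNn : 2 * n ≤ n ^ (m - 1) := by
    have : 2 * n ≤ n * n := Nat.mul_le_mul_right n hn
    omega
  have hN4 : 4 ≤ n ^ (m - 1) := by omega
  -- bound on the "low" subtrahends
  have lowbound : ∀ i < m - 1, ∀ j ≤ n - 2,
      n ^ i * (n - j) ≤ n ^ (m - 1) ∧ 2 ≤ n ^ i * (n - j) := by
    intro i hi j hj
    constructor
    · calc n ^ i * (n - j) ≤ n ^ (m - 2) * n :=
            Nat.mul_le_mul (Nat.pow_le_pow_right (by omega) (by omega)) (by omega)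
        _ = n ^ (m - 1) := by rw [← pow_succ]; congr 1; omega
    · calc 2 ≤ n - j := by omega
        _ ≤ n ^ i * (n - j) := Nat.le_mul_of_pos_left _ (Nat.pow_pos (by omega))
  -- bound on "mid" summands with exponent < m - 1
  have midbound : ∀ i ≤ m - 2, ∀ d ≤ n - 2,
      n ^ i * d ≤ n ^ (m - 1) - 2 := by
    intro i hi d hd
    have h1 : n ^ i * d ≤ n ^ (m - 2) * (n - 2) :=
      Nat.mul_le_mul (Nat.pow_le_pow_right (by omega) hi) hd
    have h2 : n ^ (m - 2) * (n - 2) + n ^ (m - 2) * 2 = n ^ (m - 2) * n := by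
      rw [← Nat.mul_add]; congr 1; omega
    have h3 : n ^ (m - 2) * n = n ^ (m - 1) := by rw [← pow_succ]; congr 1; omega
    have h4 : 1 ≤ n ^ (m - 2) := Nat.pow_pos (by omega)
    omega
  rcases c1 with ⟨hj1, c1⟩ | ⟨hj1, hj1', c1⟩ | ⟨hj1, c1⟩ <;>
      [rcases c2 with ⟨hj2', c2⟩ | ⟨hj2', hj2'', c2⟩ | ⟨hj2', c2⟩;
       rcases c2 with ⟨hj2', c2⟩ | ⟨hj2', hj2'', c2⟩ | ⟨hj2', c2⟩;
       rcases c2 with ⟨hj2', c2⟩ | ⟨hj2', hj2'', c2⟩ | ⟨hj2', c2⟩]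
  -- Lo–Lo
  · rcases c1 with h1 | ⟨i, hi, h1⟩ <;> rcases c2 with h2 | ⟨l, hl, h2⟩
    · -- (j1+1)N - 1 = (j2+1)N - 1
      have e1 : (j1 + 1) * n ^ (m - 1) = j1 * n ^ (m - 1) + n ^ (m - 1) := by ring
      have e2 : (j2 + 1) * n ^ (m - 1) = j2 * n ^ (m - 1) + n ^ (m - 1) := by ring
      have e3 : j1 * n ^ (m - 1) + n ^ (m - 1) = j2 * n ^ (m - 1) + n ^ (m - 1) := by omega
      have := Nat.eq_of_mul_eq_mul_right hNpos (show j1 * n ^ (m - 1) = j2 * n ^ (m - 1) by omega)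
      omega
    · have hb := lowbound l hl j2 hj2'
      have e1 : (j1 + 1) * n ^ (m - 1) = j1 * n ^ (m - 1) + n ^ (m - 1) := by ring
      omega
    · have hb := lowbound i hi j1 hj1
      have e2 : (j2 + 1) * n ^ (m - 1) = j2 * n ^ (m - 1) + n ^ (m - 1) := by ring
      omega
    · have hb1 := lowbound i hi j1 hj1
      have hb2 := lowbound l hl j2 hj2'
      have heq : n ^ i * (n - j1) = n ^ l * (n - j2) := by omega
      have hnb : n * 2 ≤ n * (n - j2) := Nat.mul_le_mul_left n (by omega)
      have hna : n * 2 ≤ n * (n - j1) := Nat.mul_le_mul_left n (by omega)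
      have := key hn (show n - j1 < n * (n - j2) by omega)
        (show n - j2 < n * (n - j1) by omega) heq
      omega
  -- Lo–Mid
  · have hj2lo : n + 1 ≤ j2 := by omega
    obtain ⟨i, hi, h2⟩ := c2
    have hd1 : 1 ≤ j2 - n := by omega
    have hdpos : 1 ≤ n ^ i * (j2 - n) :=
      Nat.mul_pos (Nat.pow_pos (by omega)) (by omega)
    rcases c1 with h1 | ⟨l, hl, h1⟩
    · -- (j1+1)N - 1 = n^i (j2-n) + N
      have e1 : (j1 + 1) * n ^ (m - 1) = j1 * n ^ (m - 1) + n ^ (m - 1) := by ring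
      have heq : j1 * n ^ (m - 1) = n ^ i * (j2 - n) + 1 := by omega
      rcases Nat.lt_or_ge i (m - 1) with hi' | hi'
      · -- i ≤ m - 2 : the right side is < N, left side is 0 or ≥ N
        have hb := midbound i (by omega) (j2 - n) (by omega)
        rcases Nat.eq_zero_or_pos j1 with hz | hz
        · subst hz; simp at heq
        · have : n ^ (m - 1) ≤ j1 * n ^ (m - 1) :=
            Nat.le_mul_of_pos_left _ hz
          omega
      · -- i = m - 1 : divisibility by N
        have hieq : i = m - 1 := by omega
        subst hieq
        have hd : n ^ (m - 1) ∣ 1 := by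
          have d1 : n ^ (m - 1) ∣ j1 * n ^ (m - 1) := dvd_mul_left _ _
          have d2 : n ^ (m - 1) ∣ n ^ (m - 1) * (j2 - n) := dvd_mul_right _ _
          have : n ^ (m - 1) * (j2 - n) = n ^ (m - 1) * (j2 - n) := rfl
          have heq' : j1 * n ^ (m - 1) = n ^ (m - 1) * (j2 - n) + 1 := by
            have : n ^ (m - 1) * (j2 - n) = n ^ (m - 1) * (j2 - n) := rfl
            omega
          rw [heq'] at d1
          exact (Nat.dvd_add_right d2).mp d1
        have := Nat.le_of_dvd one_pos hd
        omega
    · have hb := lowbound l hl j1 hj1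
      omega
  -- Lo–Top
  · rcases c1 with h1 | ⟨l, hl, h1⟩ <;> rcases c2 with h2 | ⟨i, hi, h2⟩
    · -- (j1+1)N - 1 = 1
      have e1 : (j1 + 1) * n ^ (m - 1) = j1 * n ^ (m - 1) + n ^ (m - 1) := by ring
      omega
    · -- (j1+1)N - 1 = n^i (n-1) + N
      have e1 : (j1 + 1) * n ^ (m - 1) = j1 * n ^ (m - 1) + n ^ (m - 1) := by ring
      have hpos : 1 ≤ n ^ i * (n - 1) :=
        Nat.mul_pos (Nat.pow_pos (by omega)) (by omega)
      have heq : j1 * n ^ (m - 1) = n ^ i * (n - 1) + 1 := by omega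
      rcases Nat.eq_zero_or_pos i with hz | hz
      · subst hz
        simp only [pow_zero, one_mul] at heq
        rcases Nat.eq_zero_or_pos j1 with hz1 | hz1
        · subst hz1; simp at heq
        · have : n ^ (m - 1) ≤ j1 * n ^ (m - 1) := Nat.le_mul_of_pos_left _ hz1
          omega
      · -- i ≥ 1 : divisibility by n
        have hd : n ∣ 1 := by
          have d1 : n ∣ j1 * n ^ (m - 1) :=
            Dvd.dvd.mul_left (dvd_pow_self n (by omega)) j1
          have d2 : n ∣ n ^ i * (n - 1) :=
            Dvd.dvd.mul_right (dvd_pow_self n (by omega)) _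
          rw [heq] at d1
          exact (Nat.dvd_add_right d2).mp d1
        have := Nat.le_of_dvd one_pos hd
        omega
    · -- N - n^l (n - j1) = 1
      have hb := lowbound l hl j1 hj1
      have heq : n ^ l * (n - j1) + 1 = n ^ (m - 1) := by omega
      rcases Nat.eq_zero_or_pos l with hz | hz
      · subst hz
        simp only [pow_zero, one_mul] at heq
        omega
      · have hd : n ∣ 1 := by
          have d1 : n ∣ n ^ (m - 1) := dvd_pow_self n (by omega)
          have d2 : n ∣ n ^ l * (n - j1) :=
            Dvd.dvd.mul_right (dvd_pow_self n (by omega)) _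
          rw [← heq] at d1
          exact (Nat.dvd_add_right d2).mp d1
        have := Nat.le_of_dvd one_pos hd
        omega
    · -- N - n^l (n - j1) = n^i (n-1) + N
      have hb := lowbound l hl j1 hj1
      have hpos : 1 ≤ n ^ i * (n - 1) :=
        Nat.mul_pos (Nat.pow_pos (by omega)) (by omega)
      omega
  -- Mid–Lo : impossible ranges
  · omega
  -- Mid–Mid
  · have hj1lo : n + 1 ≤ j1 := by omega
    have hj2lo : n + 1 ≤ j2 := by omega
    obtain ⟨i, hi, h1⟩ := c1
    obtain ⟨l, hl, h2⟩ := c2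
    have heq : n ^ i * (j1 - n) = n ^ l * (j2 - n) := by omega
    have hna : n * 1 ≤ n * (j1 - n) := Nat.mul_le_mul_left n (by omega)
    have hnb : n * 1 ≤ n * (j2 - n) := Nat.mul_le_mul_left n (by omega)
    have := key hn (show j1 - n < n * (j2 - n) by omega)
      (show j2 - n < n * (j1 - n) by omega) heq
    omega
  -- Mid–Top
  · have hj1lo : n + 1 ≤ j1 := by omega
    obtain ⟨i, hi, h1⟩ := c1
    have hpos : 1 ≤ n ^ i * (j1 - n) :=
      Nat.mul_pos (Nat.pow_pos (by omega)) (by omega)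
    rcases c2 with h2 | ⟨l, hl, h2⟩
    · omega
    · have heq : n ^ i * (j1 - n) = n ^ l * (n - 1) := by omega
      have hna : n * 1 ≤ n * (j1 - n) := Nat.mul_le_mul_left n (by omega)
      have hnb : n * 1 ≤ n * (n - 1) := Nat.mul_le_mul_left n (by omega)
      have := key hn (show j1 - n < n * (n - 1) by omega)
        (show n - 1 < n * (j1 - n) by omega) heq
      omega
  -- Top–Lo : impossible
  · clear c1 c2
    omega
  -- Top–Mid : impossible
  · clear c1 c2
    omega
  -- Top–Top : impossible (j1 = j2)
  · clear c1 c2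
    omega
end

section
/- Let n ≥ 2 and m ≥ 2 be integers, let i be a nonnegative integer, and let j_1, j_2 be integers with 0 ≤ j_1, j_2 ≤ 2n−1 and j_1, j_2 ∉ {n−1, n}. If (j_1+1)·n^{m−1} − 1 = n^i·(j_2 − n) + n^{m−1} (as integers), then i = 0, j_2 = 2n−1, and j_1·n^{m−1} = n. In particular, if m ≥ 3 then no such identity can hold. -/
/-- The arithmetic fact behind the comparison of the leading exponent
`(j₁+1) n^{m-1} - 1` of `P_{n,j₁,m}` (for `0 ≤ j₁ ≤ n-2`) with the exponents
`n^i (j₂ - n) + n^{m-1}`: if `m ≥ 2` and `(j₁+1) n^{m-1} - 1 = n^i (j₂-n) + n^{m-1}`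
(in ℤ), then `i = 0`, `j₂ = 2n-1` and `j₁ n^{m-1} = n`; in particular no such identity
can hold when `m ≥ 3`. -/
theorem exponents_compare (n m i j1 j2 : ℕ) (hn : 2 ≤ n) (hm : 2 ≤ m)
    (hj1 : j1 ≤ 2 * n - 1) (hj1n : j1 ≠ n - 1) (hj1n' : j1 ≠ n)
    (hj2 : j2 ≤ 2 * n - 1) (hj2n : j2 ≠ n - 1) (hj2n' : j2 ≠ n)
    (h : ((j1 : ℤ) + 1) * (n : ℤ) ^ (m - 1) - 1 =
      (n : ℤ) ^ i * ((j2 : ℤ) - (n : ℤ)) + (n : ℤ) ^ (m - 1)) :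
    (i = 0 ∧ j2 = 2 * n - 1 ∧ (j1 : ℤ) * (n : ℤ) ^ (m - 1) = (n : ℤ)) ∧
      (3 ≤ m → False) := by
  have hnZ : (2 : ℤ) ≤ (n : ℤ) := by exact_mod_cast hn
  have h' : (j1 : ℤ) * (n : ℤ) ^ (m - 1) = (n : ℤ) ^ i * ((j2 : ℤ) - n) + 1 := by
    ring_nf at h ⊢; linarith
  -- i = 0
  have hi : i = 0 := by
    by_contra hi
    have h1 : (n : ℤ) ∣ (j1 : ℤ) * (n : ℤ) ^ (m - 1) :=
      (dvd_pow_self (n : ℤ) (by omega : m - 1 ≠ 0)).mul_left _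
    have h2 : (n : ℤ) ∣ (n : ℤ) ^ i * ((j2 : ℤ) - n) :=
      (dvd_pow_self (n : ℤ) hi).mul_right _
    rw [h'] at h1
    have : (n : ℤ) ∣ 1 := (dvd_add_right h2).mp h1
    have := Int.le_of_dvd one_pos this
    linarith
  subst hi
  rw [pow_zero, one_mul] at h'
  -- h' : j1 * n^(m-1) = j2 - n + 1
  have hNn : (n : ℤ) ≤ (n : ℤ) ^ (m - 1) := by
    calc (n : ℤ) = (n : ℤ) ^ 1 := (pow_one _).symm
    _ ≤ (n : ℤ) ^ (m - 1) := pow_le_pow_right₀ (by linarith) (by omega)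
  have hj1pos : 1 ≤ j1 := by
    rcases Nat.eq_zero_or_pos j1 with h0 | h0
    · subst h0
      simp at h'
      have : (j2 : ℤ) = (n : ℤ) - 1 := by linarith
      have : j2 = n - 1 := by omega
      exact absurd this hj2n
    · exact h0
  have hj1Z : (1 : ℤ) ≤ (j1 : ℤ) := by exact_mod_cast hj1pos
  have hge : (n : ℤ) ^ (m - 1) ≤ (j1 : ℤ) * (n : ℤ) ^ (m - 1) :=
    le_mul_of_one_le_left (by linarith) hj1Z
  have hj2Z : (j2 : ℤ) ≤ 2 * n - 1 := by
    have : (j2 : ℤ) ≤ ((2 * n - 1 : ℕ) : ℤ) := by exact_mod_cast hj2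
    omega
  -- j1 * n^(m-1) = n
  have key : (j1 : ℤ) * (n : ℤ) ^ (m - 1) = (n : ℤ) := by
    have hle : (j1 : ℤ) * (n : ℤ) ^ (m - 1) ≤ n := by rw [h']; linarith
    linarith
  have hj2eq : j2 = 2 * n - 1 := by
    have : (j2 : ℤ) = 2 * n - 1 := by rw [key] at h'; linarith
    omega
  refine ⟨⟨rfl, hj2eq, key⟩, fun hm3 => ?_⟩
  have hN2 : (n : ℤ) * n ≤ (n : ℤ) ^ (m - 1) := by
    calc (n : ℤ) * n = (n : ℤ) ^ 2 := (sq _).symm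
    _ ≤ (n : ℤ) ^ (m - 1) := pow_le_pow_right₀ (by linarith) (by omega)
  nlinarith
end

section
/- Let n ≥ 2 and m ≥ 1 be integers. Then there exists a point z_0 ∈ ℂ with z_0 ≠ 0 that is a periodic point of minimal period m of the map f_0(w) = w^n and satisfies P_{n,0,m}(z_0) ≠ 0, where P_{n,0,m}(z) = −n^m·(z^{n^{m−1}−1} + Σ_{i=0}^{m−2} z^{n^{m−1}−n^{i+1}}). -/
/-- The set of periodic points `z ∈ ℂ` of minimal period `m` of the map `f₀(w) = wⁿ`:
`f₀^∘m(z) = z` and `f₀^∘r(z) ≠ z` for all `1 ≤ r < m`. -/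
def perSet (n m : ℕ) : Set ℂ :=
  {z : ℂ | (fun w : ℂ => w ^ n)^[m] z = z ∧
    ∀ r, 1 ≤ r → r < m → (fun w : ℂ => w ^ n)^[r] z ≠ z}

lemma iter_pow_eq (n k : ℕ) (z : ℂ) : (fun w : ℂ => w ^ n)^[k] z = z ^ n ^ k := by
  induction k with
  | zero => simp
  | succ k ih =>
    rw [Function.iterate_succ_apply', ih, ← pow_mul, ← pow_succ]

/-- Proposition 6.3 (base of the induction): there exists a nonzero periodic point `z₀`
of minimal period `m` of `f₀(w) = wⁿ` with `P_{n,0,m}(z₀) ≠ 0`, where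
`P_{n,0,m}(z) = -n^m (z^{n^{m-1}-1} + ∑_{i=0}^{m-2} z^{n^{m-1}-n^{i+1}})`. -/
theorem exists_nonvanishing_perPoint (n m : ℕ) (hn : 2 ≤ n) (hm : 1 ≤ m) :
    ∃ z0 : ℂ, z0 ≠ 0 ∧ z0 ∈ perSet n m ∧
      Polynomial.eval z0
        (Polynomial.C (-(n : ℂ) ^ m) *
          (Polynomial.X ^ (n ^ (m - 1) - 1) +
            ∑ i ∈ Finset.range (m - 1), Polynomial.X ^ (n ^ (m - 1) - n ^ (i + 1)))) ≠ 0 := by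
  have hn0 : n ≠ 0 := by omega
  have hnC : (n : ℂ) ≠ 0 := Nat.cast_ne_zero.mpr hn0
  rcases eq_or_lt_of_le hm with h1 | hm2
  · -- case m = 1
    subst h1
    refine ⟨1, one_ne_zero, ⟨by simp [perSet, iter_pow_eq], fun r hr hrm => by omega⟩, ?_⟩
    simp [pow_ne_zero, hnC]
  · -- case m ≥ 2
    set M : ℕ := n ^ m - 1 with hMdef
    have hnm2 : 2 ≤ n ^ m := le_trans hn (Nat.le_self_pow (by omega) n)
    have hM0 : M ≠ 0 := by omega
    have hMR : (0 : ℝ) < (M : ℝ) := by positivity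
    set z0 : ℂ := Complex.exp (2 * Real.pi * Complex.I / M) with hz0def
    have hprim : IsPrimitiveRoot z0 M := Complex.isPrimitiveRoot_exp M hM0
    have hz0 : z0 ≠ 0 := Complex.exp_ne_zero _
    have hpow : ∀ e : ℕ, z0 ^ e =
        Complex.exp (((2 * Real.pi * e / M : ℝ) : ℂ) * Complex.I) := by
      intro e
      rw [hz0def, ← Complex.exp_nat_mul]
      congr 1
      have hMC : (M : ℂ) ≠ 0 := Nat.cast_ne_zero.mpr hM0
      push_cast
      field_simp
    have him : ∀ e : ℕ, (z0 ^ e).im = Real.sin (2 * Real.pi * e / M) := by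
      intro e; rw [hpow e]; exact Complex.exp_ofReal_mul_I_im _
    refine ⟨z0, hz0, ⟨?_, ?_⟩, ?_⟩
    · rw [iter_pow_eq]
      have hme : n ^ m = M + 1 := by omega
      rw [hme, pow_succ, hprim.pow_eq_one, one_mul]
    · intro r hr hrm hiter
      rw [iter_pow_eq] at hiter
      have hnr : n ≤ n ^ r := Nat.le_self_pow (by omega) n
      have h1 : z0 ^ (n ^ r - 1) = 1 := by
        have h2 : z0 ^ (n ^ r - 1) * z0 = 1 * z0 := by
          rw [one_mul, ← pow_succ]
          have h3 : n ^ r - 1 + 1 = n ^ r := by omega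
          rw [h3]; exact hiter
        exact mul_right_cancel₀ hz0 h2
      have hlt : n ^ r < n ^ m := Nat.pow_lt_pow_right (by omega) hrm
      exact hprim.pow_ne_one_of_pos_of_lt (by omega) (by omega) h1
    · rw [Polynomial.eval_mul, Polynomial.eval_C, Polynomial.eval_add,
        Polynomial.eval_pow, Polynomial.eval_X, Polynomial.eval_finset_sum]
      simp only [Polynomial.eval_pow, Polynomial.eval_X]
      apply mul_ne_zero
      · exact neg_ne_zero.mpr (pow_ne_zero m hnC)
      set N : ℕ := n ^ (m - 1) with hNdef
      have hN2 : 2 ≤ N := le_trans hn (Nat.le_self_pow (by omega) n)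
      have hNM : n * N = n ^ m := by
        rw [hNdef, ← pow_succ']
        congr 1
        omega
      have h2N : 2 * N ≤ n ^ m := by
        rw [← hNM]; exact Nat.mul_le_mul_right N hn
      have hkey : 2 * (N - 1) < M := by omega
      -- angle bounds
      have hbound : ∀ e : ℕ, 2 * e < M → 0 ≤ (z0 ^ e).im := by
        intro e he
        rw [him e]
        apply Real.sin_nonneg_of_nonneg_of_le_pi
        · positivity
        · rw [div_le_iff₀ hMR]
          have heR : 2 * (e : ℝ) < (M : ℝ) := by exact_mod_cast he
          nlinarith [Real.pi_pos]
      have hposim : 0 < (z0 ^ (N - 1)).im := by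
        rw [him]
        apply Real.sin_pos_of_pos_of_lt_pi
        · have : (0 : ℝ) < ((N - 1 : ℕ) : ℝ) := by
            have : 0 < N - 1 := by omega
            exact_mod_cast this
          positivity
        · rw [div_lt_iff₀ hMR]
          have heR : 2 * ((N - 1 : ℕ) : ℝ) < (M : ℝ) := by exact_mod_cast hkey
          nlinarith [Real.pi_pos]
      intro h0
      have him0 : (z0 ^ (N - 1) +
          ∑ i ∈ Finset.range (m - 1), z0 ^ (N - n ^ (i + 1))).im = 0 := by
        rw [h0]; rfl
      rw [Complex.add_im, Complex.im_sum] at him0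
      have hsum : 0 ≤ ∑ i ∈ Finset.range (m - 1), (z0 ^ (N - n ^ (i + 1))).im := by
        apply Finset.sum_nonneg
        intro i _
        apply hbound
        have h1 : 1 ≤ n ^ (i + 1) := Nat.one_le_pow _ _ (by omega)
        omega
      linarith
end

section
/- Let n ≥ 3 be an integer and J_n = {0,…,n−2} ∪ {n+1,…,2n−1}. Let (m_k)_{k∈J_n} be positive integers such that exactly n of them equal 1, none of them equals 2, and at least one of them is greater than 2. Then there exist an index t ∈ J_n with m_t = 1 and nonzero complex numbers z_k (k ∈ J_n, k ≠ t), each a periodic point of minimal period m_k of the map f_0(w) = w^n, such that the (2n−2)×(2n−2) matrix with rows and columns indexed by J_n, whose row t is the vector with entry −1 in column 2n−1 and 0 in every other column, and whose (k,i)-entry for k ≠ t is z_k^{−n^{m_k−1}}·P_{n,i,m_k}(z_k), is invertible. -/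
/-- The index set `J_n = {0,…,n-2} ∪ {n+1,…,2n-1}`. -/
def Jset (n : ℕ) : Finset ℕ :=
  (Finset.range (2 * n)).filter (fun k => k ≠ n - 1 ∧ k ≠ n)

section AuxiliaryForProp71

open Finset Polynomial



/-- power sum over an orbit -/
noncomputable def Sg (n mk : ℕ) (ξ : ℂ) (e : ℤ) : ℂ :=
  ∑ j ∈ Finset.range mk, ξ ^ (e * (n : ℤ) ^ j)

noncomputable def Wf (n mk : ℕ) (zk : ℂ) (i : ℕ) : ℂ := Sg n mk zk ((i : ℤ) - n)

noncomputable def Bf (n mk r : ℕ) (ξ : ℂ) : ℂ :=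
  Sg n mk ξ (r : ℤ) - Sg n mk ξ ((r : ℤ) - ((n : ℤ) - 1))

def rho (n i : ℕ) : ℕ := if i ≤ n - 2 then (if i = 0 then n - 2 else i - 1) else i - n

lemma zpow_eq_zpow_of_dvd' {z : ℂ} (hz0 : z ≠ 0) {d : ℕ} (hd : z ^ d = 1) {a b : ℤ}
    (h : (d : ℤ) ∣ a - b) : z ^ a = z ^ b := by
  obtain ⟨c, hc⟩ := h
  have ha : a = b + (d : ℤ) * c := by linarith
  rw [ha, zpow_add₀ hz0, zpow_mul, zpow_natCast, hd, one_zpow, mul_one]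

lemma pow_pred_eq_one {z : ℂ} (hz0 : z ≠ 0) {d : ℕ} (hd : 1 ≤ d) (h : z ^ d = z) :
    z ^ (d - 1) = 1 := by
  have h2 : z ^ (d - 1) * z = 1 * z := by
    rw [← pow_succ, one_mul]
    have : d - 1 + 1 = d := by omega
    rw [this, h]
  exact mul_right_cancel₀ hz0 h2

lemma mem_Jset {n i : ℕ} : i ∈ Jset n ↔ i < 2 * n ∧ i ≠ n - 1 ∧ i ≠ n := by
  simp [Jset, Finset.mem_filter, Finset.mem_range, and_assoc]

lemma zpow_rho {n : ℕ} (hn : 3 ≤ n) {ζ : ℂ} (hz0 : ζ ≠ 0) (hζ : ζ ^ (n - 1) = 1)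
    {i : ℕ} (hi : i ∈ Jset n) (j : ℕ) :
    ζ ^ (((i : ℤ) - n) * (n : ℤ) ^ j) = ζ ^ (rho n i) := by
  rw [mem_Jset] at hi
  rw [← zpow_natCast ζ (rho n i)]
  apply zpow_eq_zpow_of_dvd' hz0 hζ
  have h1 : ((n : ℤ) - 1) ∣ (n : ℤ) ^ j - 1 := by
    simpa using sub_dvd_pow_sub_pow (n : ℤ) 1 j
  have hc : ((n - 1 : ℕ) : ℤ) = (n : ℤ) - 1 := by
    have : 1 ≤ n := by omega
    push_cast [this]; ring
  rw [hc]
  have hsplit : ((i : ℤ) - n) * (n : ℤ) ^ j - (rho n i : ℤ) =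
      ((i : ℤ) - n) * ((n : ℤ) ^ j - 1) + (((i : ℤ) - n) - (rho n i : ℤ)) := by ring
  rw [hsplit]
  refine dvd_add (Dvd.dvd.mul_left h1 _) ?_
  unfold rho
  split_ifs with h2 h3
  · -- i = 0, rho = n - 2
    refine ⟨-2, ?_⟩
    subst h3
    have h4 : ((n - 2 : ℕ) : ℤ) = (n : ℤ) - 2 := by
      have : 2 ≤ n := by omega
      push_cast [this]; ring
    rw [h4]; push_cast; ring
  · -- 1 ≤ i ≤ n - 2, rho = i - 1
    refine ⟨-1, ?_⟩
    have h4 : ((i - 1 : ℕ) : ℤ) = (i : ℤ) - 1 := by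
      have : 1 ≤ i := by omega
      push_cast [this]; ring
    rw [h4]; ring
  · -- i ≥ n + 1, rho = i - n
    refine ⟨0, ?_⟩
    have h5 : n + 1 ≤ i := by omega
    have h4 : ((i - n : ℕ) : ℤ) = (i : ℤ) - n := by
      have : n ≤ i := by omega
      push_cast [this]; ring
    rw [h4]; ring

lemma Wf_one {n : ℕ} (hn : 3 ≤ n) {ζ : ℂ} (hz0 : ζ ≠ 0) (hζ : ζ ^ (n - 1) = 1)
    {i : ℕ} (hi : i ∈ Jset n) : Wf n 1 ζ i = ζ ^ (rho n i) := by
  unfold Wf Sg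
  rw [Finset.sum_range_one]
  exact zpow_rho hn hz0 hζ hi 0

lemma Wf_mul {n : ℕ} (hn : 3 ≤ n) {ζ ξ : ℂ} (hz0 : ζ ≠ 0) (hξ0 : ξ ≠ 0)
    (hζ : ζ ^ (n - 1) = 1) {i : ℕ} (hi : i ∈ Jset n) (mk : ℕ) :
    Wf n mk (ζ * ξ) i = ζ ^ (rho n i) * Sg n mk ξ ((i : ℤ) - n) := by
  unfold Wf Sg
  rw [Finset.mul_sum]
  refine Finset.sum_congr rfl fun j _ => ?_
  rw [mul_zpow, zpow_rho hn hz0 hζ hi j]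

lemma Sg_shift {n : ℕ} (hn : 3 ≤ n) {ξ : ℂ} (hξ0 : ξ ≠ 0) {mk : ℕ} (hmk : 1 ≤ mk)
    (hξ : ξ ^ (n ^ mk) = ξ) : Sg n mk ξ (-(n : ℤ)) = Sg n mk ξ (-1) := by
  have h1 : ξ ^ (n ^ mk - 1) = 1 := pow_pred_eq_one hξ0 (Nat.one_le_pow _ _ (by omega)) hξ
  unfold Sg
  have hterm : ∀ j, ξ ^ ((-(n : ℤ)) * (n : ℤ) ^ j) = ξ ^ (-((n : ℤ) ^ (j + 1))) := by
    intro j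
    congr 1
    ring
  calc ∑ j ∈ Finset.range mk, ξ ^ ((-(n:ℤ)) * (n:ℤ) ^ j)
      = ∑ j ∈ Finset.range mk, ξ ^ (-((n:ℤ) ^ (j+1))) := Finset.sum_congr rfl fun j _ => hterm j
    _ = ∑ j ∈ Finset.Ico 1 (mk + 1), ξ ^ (-((n:ℤ) ^ j)) := by
        rw [Finset.sum_Ico_eq_sum_range]
        simp only [Nat.add_sub_cancel]
        exact Finset.sum_congr rfl fun j _ => by rw [Nat.add_comm 1 j]
    _ = ∑ j ∈ Finset.Ico 1 mk, ξ ^ (-((n:ℤ) ^ j)) + ξ ^ (-((n:ℤ) ^ mk)) := by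
        rw [Finset.sum_Ico_succ_top hmk]
    _ = ξ ^ (-((n:ℤ) ^ 0)) + ∑ j ∈ Finset.Ico 1 mk, ξ ^ (-((n:ℤ) ^ j)) := by
        rw [add_comm]
        congr 1
        apply zpow_eq_zpow_of_dvd' hξ0 h1
        have hcast : ((n ^ mk - 1 : ℕ) : ℤ) = (n : ℤ) ^ mk - 1 := by
          have : 1 ≤ n ^ mk := Nat.one_le_pow _ _ (by omega)
          push_cast [this]; ring
        rw [hcast]
        exact ⟨-1, by ring⟩
    _ = ∑ j ∈ Finset.range mk, ξ ^ (-((n:ℤ) ^ j)) := by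
        rw [Finset.range_eq_Ico, Finset.sum_eq_sum_Ico_succ_bot (by omega : 0 < mk)]
    _ = ∑ j ∈ Finset.range mk, ξ ^ ((-1 : ℤ) * (n:ℤ) ^ j) := by
        refine Finset.sum_congr rfl fun j _ => ?_
        congr 1
        ring

lemma eval_P {n : ℕ} (hn : 3 ≤ n) {mk : ℕ} (hmk : 1 ≤ mk) {i : ℕ} (hi : i ∈ Jset n)
    {z : ℂ} (hz0 : z ≠ 0) (hz : z ^ (n ^ mk) = z) :
    z ^ (-((n : ℤ) ^ (mk - 1))) * (P n i mk).eval z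
      = (n : ℂ) ^ (mk - 1) * ((i : ℂ) - n) * Wf n mk z i := by
  have hz1 : z ^ (n ^ mk - 1) = 1 :=
    pow_pred_eq_one hz0 (Nat.one_le_pow _ _ (by omega)) hz
  have hcastN : ((n ^ mk - 1 : ℕ) : ℤ) = (n : ℤ) ^ mk - 1 := by
    have : 1 ≤ n ^ mk := Nat.one_le_pow _ _ (by omega)
    push_cast [this]; ring
  have hpowZ : (n : ℤ) ^ (mk - 1) * (n : ℤ) = (n : ℤ) ^ mk := by
    rw [← pow_succ]; congr 1; omega
  have hiJ := mem_Jset.mp hi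
  have hcoef : ((i : ℂ) * (n : ℂ) ^ (mk - 1) - (n : ℂ) ^ mk)
      = (n : ℂ) ^ (mk - 1) * ((i : ℂ) - n) := by
    have h : (n : ℂ) ^ mk = (n : ℂ) ^ (mk - 1) * (n : ℂ) := by
      rw [← pow_succ]; congr 1; omega
    rw [h]; ring
  rw [P, Polynomial.eval_mul, Polynomial.eval_C, hcoef, mul_left_comm]
  congr 1
  unfold Wf Sg
  rcases (by omega : i ≤ n - 2 ∨ (n + 1 ≤ i ∧ i ≤ 2 * n - 2) ∨ i = 2 * n - 1) with hc | hc | hc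
  · rw [if_pos hc]
    simp only [Polynomial.eval_add, Polynomial.eval_pow, Polynomial.eval_X,
      Polynomial.eval_finset_sum]
    rw [show mk = (mk - 1) + 1 by omega, Finset.sum_range_succ, mul_add, Finset.mul_sum]
    rw [show (mk - 1) + 1 - 1 = mk - 1 by omega]
    have hmain : z ^ (-((n : ℤ) ^ (mk - 1))) * z ^ ((i + 1) * n ^ (mk - 1) - 1)
        = z ^ (((i : ℤ) - n) * (n : ℤ) ^ (mk - 1)) := by
      rw [← zpow_natCast z ((i + 1) * n ^ (mk - 1) - 1), ← zpow_add₀ hz0]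
      apply zpow_eq_zpow_of_dvd' hz0 hz1
      have hle3 : 1 ≤ (i + 1) * n ^ (mk - 1) :=
        Nat.one_le_iff_ne_zero.mpr (by positivity)
      rw [hcastN]
      refine ⟨1, ?_⟩
      push_cast [hle3]
      nlinarith [hpowZ]
    have hsum : ∀ j ∈ Finset.range (mk - 1),
        z ^ (-((n : ℤ) ^ (mk - 1))) * z ^ (n ^ (mk - 1) - n ^ j * (n - i))
          = z ^ (((i : ℤ) - n) * (n : ℤ) ^ j) := by
      intro j hj
      have hj' : j < mk - 1 := Finset.mem_range.mp hj
      have hle1 : n ^ j * (n - i) ≤ n ^ (mk - 1) :=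
        calc n ^ j * (n - i) ≤ n ^ j * n := Nat.mul_le_mul_left _ (by omega)
        _ = n ^ (j + 1) := (pow_succ n j).symm
        _ ≤ n ^ (mk - 1) := Nat.pow_le_pow_right (by omega) (by omega)
      have hle2 : i ≤ n := by omega
      rw [← zpow_natCast z (n ^ (mk - 1) - n ^ j * (n - i)), ← zpow_add₀ hz0]
      congr 1
      push_cast [hle1, hle2]
      ring
    rw [hmain, Finset.sum_congr rfl hsum]
    exact add_comm _ _
  · rw [if_neg (by omega), if_pos (by omega)]
    simp only [Polynomial.eval_finset_sum, Polynomial.eval_pow, Polynomial.eval_X]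
    rw [Finset.mul_sum]
    refine Finset.sum_congr rfl fun j hj => ?_
    rw [← zpow_natCast z (n ^ j * (i - n) + n ^ (mk - 1)), ← zpow_add₀ hz0]
    congr 1
    have hle2 : n ≤ i := by omega
    push_cast [hle2]
    ring
  · rw [if_neg (by omega), if_neg (by omega)]
    simp only [Polynomial.eval_add, Polynomial.eval_pow, Polynomial.eval_X,
      Polynomial.eval_finset_sum]
    rw [show mk = (mk - 1) + 1 by omega, Finset.sum_range_succ, mul_add, Finset.mul_sum]
    rw [show (mk - 1) + 1 - 1 = mk - 1 by omega]
    have hicast : ((i : ℤ) - n) = (n : ℤ) - 1 := by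
      subst hc
      push_cast [show 1 ≤ 2 * n by omega]
      ring
    have hmain : z ^ (-((n : ℤ) ^ (mk - 1))) * z
        = z ^ (((i : ℤ) - n) * (n : ℤ) ^ (mk - 1)) := by
      have h1 : z ^ (-((n : ℤ) ^ (mk - 1))) * z = z ^ ((1 : ℤ) - (n : ℤ) ^ (mk - 1)) := by
        rw [sub_eq_add_neg, add_comm, zpow_add₀ hz0, zpow_one, mul_comm]
      rw [h1]
      apply zpow_eq_zpow_of_dvd' hz0 hz1
      rw [hcastN, hicast]
      refine ⟨-1, ?_⟩
      nlinarith [hpowZ]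
    have hsum : ∀ j ∈ Finset.range (mk - 1),
        z ^ (-((n : ℤ) ^ (mk - 1))) * z ^ (n ^ j * (n - 1) + n ^ (mk - 1))
          = z ^ (((i : ℤ) - n) * (n : ℤ) ^ j) := by
      intro j hj
      rw [← zpow_natCast z (n ^ j * (n - 1) + n ^ (mk - 1)), ← zpow_add₀ hz0]
      congr 1
      rw [hicast]
      push_cast [show 1 ≤ n by omega]
      ring
    rw [hmain, Finset.sum_congr rfl hsum]
    exact add_comm _ _

lemma iterate_pow_apply (n j : ℕ) (z : ℂ) : (fun w : ℂ => w ^ n)^[j] z = z ^ (n ^ j) := by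
  induction j with
  | zero => simp
  | succ j ih => rw [Function.iterate_succ_apply', ih, ← pow_mul, pow_succ]

lemma zpow_eq_zpow_of_dvd {z : ℂ} (hz0 : z ≠ 0) {d : ℕ} (hd : z ^ d = 1) {a b : ℤ}
    (h : (d : ℤ) ∣ a - b) : z ^ a = z ^ b := by
  obtain ⟨c, hc⟩ := h
  have ha : a = b + (d : ℤ) * c := by linarith
  rw [ha, zpow_add₀ hz0, zpow_mul, zpow_natCast, hd, one_zpow, mul_one]

lemma gcd_pow_sub_one (n : ℕ) (hn : 1 ≤ n) : ∀ j m : ℕ,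
    Nat.gcd (n ^ j - 1) (n ^ m - 1) ∣ n ^ Nat.gcd j m - 1 := by
  intro j
  induction j using Nat.strong_induction_on with
  | _ j ih =>
    intro m
    match j with
    | 0 => simp
    | (j + 1) =>
      set J := j + 1 with hJ
      have hJ0 : 0 < J := Nat.succ_pos j
      set g := Nat.gcd (n ^ J - 1) (n ^ m - 1) with hg
      have h1 : g ∣ n ^ J - 1 := Nat.gcd_dvd_left _ _
      have h2 : g ∣ n ^ m - 1 := Nat.gcd_dvd_right _ _
      have hpow : n ^ m = n ^ (m % J) * (n ^ J) ^ (m / J) := by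
        rw [← pow_mul, ← pow_add]
        congr 1
        exact (Nat.mod_add_div m J).symm
      have hd1 : n ^ J - 1 ∣ (n ^ J) ^ (m / J) - 1 := by
        simpa using Nat.sub_dvd_pow_sub_pow (n ^ J) 1 (m / J)
      have hd2 : g ∣ n ^ m - n ^ (m % J) := by
        have : n ^ m - n ^ (m % J) = n ^ (m % J) * ((n ^ J) ^ (m / J) - 1) := by
          rw [Nat.mul_sub, ← hpow, mul_one]
        rw [this]
        exact Dvd.dvd.mul_left (h1.trans hd1) _
      have hle : n ^ (m % J) ≤ n ^ m := Nat.pow_le_pow_right hn (Nat.mod_le m J)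
      have hpos : 1 ≤ n ^ (m % J) := Nat.one_le_pow _ _ hn
      have h3 : g ∣ n ^ (m % J) - 1 := by
        have heq : n ^ (m % J) - 1 = (n ^ m - 1) - (n ^ m - n ^ (m % J)) := by omega
        rw [heq]
        exact Nat.dvd_sub h2 hd2
      have h4 : g ∣ Nat.gcd (n ^ (m % J) - 1) (n ^ J - 1) := Nat.dvd_gcd h3 h1
      have h5 := ih (m % J) (Nat.mod_lt m hJ0) J
      rw [Nat.gcd_rec J m]
      exact h4.trans h5

lemma geom_sum_le {n : ℕ} (hn : 2 ≤ n) (M : ℕ) :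
    ∑ d ∈ Finset.range (M + 1), n ^ d ≤ 2 * n ^ M := by
  induction M with
  | zero => simp
  | succ M ih =>
    rw [Finset.sum_range_succ]
    have h1 : 2 * n ^ M ≤ n ^ (M + 1) := by
      rw [pow_succ]
      calc 2 * n ^ M = n ^ M * 2 := by ring
      _ ≤ n ^ M * n := Nat.mul_le_mul_left _ hn
    omega

lemma exists_xi {n : ℕ} (hn : 3 ≤ n) {mk : ℕ} (hmk : 3 ≤ mk) {r : ℕ} (hr1 : 1 ≤ r)
    (hr2 : r ≤ n - 2) :
    ∃ ξ : ℂ, ξ ≠ 0 ∧ ξ ^ (n ^ mk) = ξ ∧ (∀ j, 1 ≤ j → j < mk → ξ ^ (n ^ j) ≠ ξ) ∧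
      Bf n mk r ξ ≠ 0 := by
  classical
  have hnm : 27 ≤ n ^ mk := by
    calc 27 = 3 ^ 3 := by norm_num
    _ ≤ n ^ 3 := Nat.pow_le_pow_left hn 3
    _ ≤ n ^ mk := Nat.pow_le_pow_right (by omega) hmk
  set N := n ^ mk - 1 with hN
  have hNpos : 0 < N := by omega
  set ζ := Complex.exp (2 * Real.pi * Complex.I / N) with hζ
  have hprim : IsPrimitiveRoot ζ N := Complex.isPrimitiveRoot_exp N (by omega)
  have hζ0 : ζ ≠ 0 := hprim.ne_zero (by omega)
  set D := (n - 1 - r) * n ^ (mk - 1) with hD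
  have hDpos : 0 < D := by
    apply Nat.mul_pos (by omega) (Nat.pow_pos (by omega))
  set q : Polynomial ℂ := ∑ j ∈ Finset.range mk,
      (Polynomial.X ^ (r * n ^ j + D) -
        Polynomial.X ^ ((n - 1 - r) * (n ^ (mk - 1) - n ^ j))) with hq
  have hcoeff : q.coeff 0 = -1 := by
    rw [hq, Polynomial.finset_sum_coeff]
    have hterm : ∀ j ∈ Finset.range mk,
        ((Polynomial.X ^ (r * n ^ j + D) -
          Polynomial.X ^ ((n - 1 - r) * (n ^ (mk - 1) - n ^ j)) : Polynomial ℂ).coeff 0)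
          = if j = mk - 1 then (-1 : ℂ) else 0 := by
      intro j hj
      have hjlt := Finset.mem_range.mp hj
      rw [Polynomial.coeff_sub, Polynomial.coeff_X_pow, Polynomial.coeff_X_pow]
      have h1 : ¬ (0 = r * n ^ j + D) := by omega
      rw [if_neg h1]
      by_cases h2 : j = mk - 1
      · subst h2
        rw [if_pos]
        · rw [if_pos rfl]; ring
        · rw [Nat.sub_self, Nat.mul_zero]
      · rw [if_neg, if_neg h2]
        · ring
        · intro hcontra
          have h3 : n ^ j < n ^ (mk - 1) := Nat.pow_lt_pow_right (by omega) (by omega)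
          have h4 : 0 < n - 1 - r := by omega
          have := Nat.mul_pos h4 (by omega : 0 < n ^ (mk - 1) - n ^ j)
          omega
    rw [Finset.sum_congr rfl hterm, Finset.sum_ite_eq' (Finset.range mk) (mk - 1)]
    rw [if_pos (Finset.mem_range.mpr (by omega))]
  have hq0 : q ≠ 0 := fun h => by simp [h] at hcoeff
  have hdeg : q.natDegree ≤ (n - 1) * n ^ (mk - 1) := by
    apply Polynomial.natDegree_sum_le_of_forall_le
    intro j hj
    have hjlt := Finset.mem_range.mp hj
    refine le_trans (Polynomial.natDegree_sub_le _ _) ?_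
    rw [max_le_iff, Polynomial.natDegree_X_pow, Polynomial.natDegree_X_pow]
    constructor
    · have h5 : n ^ j ≤ n ^ (mk - 1) := Nat.pow_le_pow_right (by omega) (by omega)
      have h6 : r * n ^ j ≤ r * n ^ (mk - 1) := Nat.mul_le_mul_left r h5
      have h7 : r * n ^ (mk - 1) + (n - 1 - r) * n ^ (mk - 1)
          = (n - 1) * n ^ (mk - 1) := by
        rw [← Nat.add_mul]
        congr 1
        omega
      omega
    · exact Nat.mul_le_mul (by omega) (by omega)
  set bad1 := (Finset.range N).filter (fun a => q.eval (ζ ^ a) = 0) with hbad1def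
  set bad2 := (Finset.range N).filter
      (fun a => ∃ d ∈ mk.properDivisors, (N / (n ^ d - 1)) ∣ a) with hbad2def
  have hbad1 : bad1.card ≤ (n - 1) * n ^ (mk - 1) := by
    have hmaps : ∀ a ∈ bad1, ζ ^ a ∈ q.roots.toFinset := by
      intro a ha
      rw [Multiset.mem_toFinset, Polynomial.mem_roots hq0]
      exact (Finset.mem_filter.mp ha).2
    have hinj : Set.InjOn (fun a => ζ ^ a) bad1 := by
      intro a ha b hb hab
      have haN := Finset.mem_range.mp (Finset.mem_filter.mp ha).1
      have hbN := Finset.mem_range.mp (Finset.mem_filter.mp hb).1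
      exact hprim.pow_inj haN hbN hab
    calc bad1.card ≤ q.roots.toFinset.card := Finset.card_le_card_of_injOn _ hmaps hinj
    _ ≤ Multiset.card q.roots := q.roots.toFinset_card_le
    _ ≤ q.natDegree := Polynomial.card_roots' q
    _ ≤ (n - 1) * n ^ (mk - 1) := hdeg
  have hpow_dvd : ∀ d ∈ mk.properDivisors, n ^ d - 1 ∣ N := by
    intro d hd
    obtain ⟨⟨e, he⟩, hlt⟩ := Nat.mem_properDivisors.mp hd
    rw [hN, he, pow_mul]
    simpa using Nat.sub_dvd_pow_sub_pow (n ^ d) 1 e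
  have hd1 : ∀ d ∈ mk.properDivisors, 1 ≤ d := by
    intro d hd
    obtain ⟨hdvd, hlt⟩ := Nat.mem_properDivisors.mp hd
    rcases Nat.eq_zero_or_pos d with h | h
    · subst h; rw [Nat.zero_dvd] at hdvd; omega
    · exact h
  have hbad2 : bad2.card ≤ 2 * n ^ (mk / 2) := by
    have hsub : bad2 ⊆ mk.properDivisors.biUnion
        (fun d => (Finset.range N).filter (fun a => (N / (n ^ d - 1)) ∣ a)) := by
      intro a ha
      rw [Finset.mem_biUnion]
      obtain ⟨haN, d, hd, hdvd⟩ := Finset.mem_filter.mp ha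
      exact ⟨d, hd, Finset.mem_filter.mpr ⟨haN, hdvd⟩⟩
    have hdcard : ∀ d ∈ mk.properDivisors,
        ((Finset.range N).filter (fun a => (N / (n ^ d - 1)) ∣ a)).card ≤ n ^ d - 1 := by
      intro d hd
      have hdvdN := hpow_dvd d hd
      have hd1' := hd1 d hd
      have hndpos : 0 < n ^ d - 1 := by
        have : 3 ≤ n ^ d := by
          calc 3 = 3 ^ 1 := by norm_num
          _ ≤ n ^ d := Nat.pow_le_pow_left hn 1 |>.trans (Nat.pow_le_pow_right (by omega) hd1')
        omega
      set M := N / (n ^ d - 1) with hM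
      have hMN : M * (n ^ d - 1) = N := Nat.div_mul_cancel hdvdN
      have hMpos : 0 < M := by
        rcases Nat.eq_zero_or_pos M with h | h
        · rw [h, Nat.zero_mul] at hMN; omega
        · exact h
      have hcr : (Finset.range (n ^ d - 1)).card = n ^ d - 1 := Finset.card_range _
      rw [← hcr]
      apply Finset.card_le_card_of_injOn (fun a => a / M)
      · intro a ha
        obtain ⟨haN, hdvd⟩ := Finset.mem_filter.mp ha
        rw [Finset.mem_range] at haN
        simp only [Finset.coe_range, Set.mem_Iio]
        obtain ⟨c, hc⟩ := hdvd
        subst hc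
        rw [Nat.mul_div_cancel_left c hMpos]
        by_contra hcon
        push_neg at hcon
        have : M * (n ^ d - 1) ≤ M * c := Nat.mul_le_mul_left M hcon
        omega
      · intro a ha b hb hab
        obtain ⟨haN, hdvda⟩ := Finset.mem_filter.mp ha
        obtain ⟨hbN, hdvdb⟩ := Finset.mem_filter.mp hb
        simp only at hab
        rw [← Nat.mul_div_cancel' hdvda, ← Nat.mul_div_cancel' hdvdb, hab]
    have hpd : mk.properDivisors ⊆ Finset.range (mk / 2 + 1) := by
      intro d hd
      rw [Finset.mem_range]
      obtain ⟨⟨e, he⟩, hlt⟩ := Nat.mem_properDivisors.mp hd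
      have he2 : 2 ≤ e := by
        rcases (by omega : e = 0 ∨ e = 1 ∨ 2 ≤ e) with h | h | h
        · subst h; omega
        · subst h; omega
        · exact h
      have h2d : 2 * d ≤ mk := by
        calc 2 * d ≤ e * d := Nat.mul_le_mul_right d he2
        _ = mk := by rw [he, Nat.mul_comm]
      omega
    calc bad2.card ≤ (mk.properDivisors.biUnion
        (fun d => (Finset.range N).filter (fun a => (N / (n ^ d - 1)) ∣ a))).card :=
          Finset.card_le_card hsub
    _ ≤ ∑ d ∈ mk.properDivisors,
          ((Finset.range N).filter (fun a => (N / (n ^ d - 1)) ∣ a)).card :=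
          Finset.card_biUnion_le
    _ ≤ ∑ d ∈ mk.properDivisors, (n ^ d - 1) := Finset.sum_le_sum hdcard
    _ ≤ ∑ d ∈ mk.properDivisors, n ^ d := Finset.sum_le_sum fun d _ => Nat.sub_le _ _
    _ ≤ ∑ d ∈ Finset.range (mk / 2 + 1), n ^ d :=
          Finset.sum_le_sum_of_subset hpd
    _ ≤ 2 * n ^ (mk / 2) := geom_sum_le (by omega) _
  have htotal : bad1.card + bad2.card < N := by
    have h1 : n ^ (mk / 2) ≤ n ^ (mk - 2) := Nat.pow_le_pow_right (by omega) (by omega)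
    have ha3 : 3 ≤ n ^ (mk - 2) := by
      calc 3 = 3 ^ 1 := by norm_num
      _ ≤ n ^ 1 := Nat.pow_le_pow_left hn 1
      _ ≤ n ^ (mk - 2) := Nat.pow_le_pow_right (by omega) (by omega)
    have hb : n ^ (mk - 1) = n * n ^ (mk - 2) := by
      rw [← pow_succ']
      congr 1
      omega
    have hc : n ^ mk = n * n ^ (mk - 1) := by
      rw [← pow_succ']
      congr 1
      omega
    have hx : (n - 1) * n ^ (mk - 1) + n ^ (mk - 1) = n * n ^ (mk - 1) := by
      rw [Nat.sub_one_mul]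
      have : n ^ (mk - 1) ≤ n * n ^ (mk - 1) := Nat.le_mul_of_pos_left _ (by omega)
      omega
    have hy : 3 * n ^ (mk - 2) ≤ n ^ (mk - 1) := by
      rw [hb]
      exact Nat.mul_le_mul_right _ hn
    omega
  have hex : ∃ a ∈ Finset.range N, a ∉ bad1 ∧ a ∉ bad2 := by
    by_contra hcon
    push_neg at hcon
    have hsub : Finset.range N ⊆ bad1 ∪ bad2 := by
      intro a ha
      by_cases h : a ∈ bad1
      · exact Finset.mem_union_left _ h
      · exact Finset.mem_union_right _ (hcon a ha h)
    have h1 := Finset.card_le_card hsub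
    rw [Finset.card_range] at h1
    have h2 := Finset.card_union_le bad1 bad2
    omega
  obtain ⟨aa, haN, ha1, ha2⟩ := hex
  have haNlt := Finset.mem_range.mp haN
  set ξ := ζ ^ aa with hξ
  have hξ0 : ξ ≠ 0 := pow_ne_zero _ hζ0
  have hξN : ξ ^ N = 1 := by
    rw [hξ, ← pow_mul, Nat.mul_comm, pow_mul, hprim.pow_eq_one, one_pow]
  have hξper : ξ ^ (n ^ mk) = ξ := by
    rw [show n ^ mk = N + 1 by omega, pow_succ, hξN, one_mul]
  refine ⟨ξ, hξ0, hξper, ?_, ?_⟩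
  · intro j hj1 hj2 heq
    have h1 : ξ ^ (n ^ j - 1) = 1 :=
      pow_pred_eq_one hξ0 (Nat.one_le_pow _ _ (by omega)) heq
    have hordj : orderOf ξ ∣ n ^ j - 1 := orderOf_dvd_of_pow_eq_one h1
    have hordN : orderOf ξ ∣ N := orderOf_dvd_of_pow_eq_one hξN
    have hgcd1 : orderOf ξ ∣ Nat.gcd (n ^ j - 1) (n ^ mk - 1) := by
      apply Nat.dvd_gcd hordj
      rw [← hN]; exact hordN
    have hord2 : orderOf ξ ∣ n ^ (Nat.gcd j mk) - 1 :=
      hgcd1.trans (gcd_pow_sub_one n (by omega) j mk)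
    have heq2 : ξ ^ (n ^ (Nat.gcd j mk) - 1) = 1 := orderOf_dvd_iff_pow_eq_one.mp hord2
    set d := Nat.gcd j mk with hdd
    have hdmem : d ∈ mk.properDivisors := by
      rw [Nat.mem_properDivisors]
      refine ⟨Nat.gcd_dvd_right _ _, ?_⟩
      calc d ≤ j := Nat.gcd_le_left _ (by omega)
      _ < mk := hj2
    have hζpow : ζ ^ (aa * (n ^ d - 1)) = 1 := by
      rw [pow_mul]; exact heq2
    have hNdvd : N ∣ aa * (n ^ d - 1) := (hprim.pow_eq_one_iff_dvd _).mp hζpow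
    have hdvdN := hpow_dvd d hdmem
    have hndpos : 0 < n ^ d - 1 := by
      have hd1' := hd1 d hdmem
      have : 3 ≤ n ^ d := by
        calc 3 ≤ n := hn
        _ = n ^ 1 := (pow_one n).symm
        _ ≤ n ^ d := Nat.pow_le_pow_right (by omega) hd1'
      omega
    have hMdvd : (N / (n ^ d - 1)) ∣ aa := by
      have hMN : (N / (n ^ d - 1)) * (n ^ d - 1) = N := Nat.div_mul_cancel hdvdN
      rw [← hMN] at hNdvd
      exact (Nat.mul_dvd_mul_iff_right hndpos).mp hNdvd
    exact ha2 (Finset.mem_filter.mpr ⟨haN, ⟨d, hdmem, hMdvd⟩⟩)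
  · have hqeval : q.eval ξ = ξ ^ D * Bf n mk r ξ := by
      rw [hq]
      unfold Bf Sg
      rw [Polynomial.eval_finset_sum, mul_sub, Finset.mul_sum, Finset.mul_sum,
        ← Finset.sum_sub_distrib]
      refine Finset.sum_congr rfl fun j hj => ?_
      have hjlt := Finset.mem_range.mp hj
      rw [Polynomial.eval_sub, Polynomial.eval_pow, Polynomial.eval_pow, Polynomial.eval_X]
      congr 1
      · rw [← zpow_natCast ξ (r * n ^ j + D), ← zpow_natCast ξ D, ← zpow_add₀ hξ0]
        congr 1
        push_cast
        ring
      · rw [← zpow_natCast ξ ((n - 1 - r) * (n ^ (mk - 1) - n ^ j)),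
          ← zpow_natCast ξ D, ← zpow_add₀ hξ0]
        congr 1
        have hle1 : n ^ j ≤ n ^ (mk - 1) := Nat.pow_le_pow_right (by omega) (by omega)
        have hle2 : r ≤ n - 1 := by omega
        have hle3 : 1 ≤ n := by omega
        rw [hD]
        push_cast [hle1, hle2, hle3]
        ring
    have hne : q.eval ξ ≠ 0 := by
      intro h
      exact ha1 (Finset.mem_filter.mpr ⟨haN, h⟩)
    intro hB
    rw [hqeval, hB, mul_zero] at hne
    exact hne rfl

lemma mem_Jp {n i : ℕ} (hn : 3 ≤ n) :
    i ∈ (Jset n).erase (2 * n - 1) ↔ (i ≤ n - 2 ∨ (n + 1 ≤ i ∧ i ≤ 2 * n - 2)) := by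
  rw [Finset.mem_erase, mem_Jset]
  omega

lemma rho_lt {n i : ℕ} (hn : 3 ≤ n) (hi : i ∈ (Jset n).erase (2 * n - 1)) :
    rho n i < n - 1 := by
  rw [mem_Jp hn] at hi
  unfold rho
  split_ifs <;> omega

lemma fiber0 {n : ℕ} (hn : 3 ≤ n) :
    ((Jset n).erase (2 * n - 1)).filter (fun i => rho n i = 0) = {1} := by
  ext i
  rw [Finset.mem_filter, mem_Jp hn, Finset.mem_singleton]
  unfold rho
  split_ifs <;> omega

lemma fiberTop {n : ℕ} (hn : 3 ≤ n) :
    ((Jset n).erase (2 * n - 1)).filter (fun i => rho n i = n - 2)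
      = {0, 2 * n - 2} := by
  ext i
  rw [Finset.mem_filter, mem_Jp hn, Finset.mem_insert, Finset.mem_singleton]
  unfold rho
  split_ifs <;> omega

lemma fiberMid {n r : ℕ} (hn : 3 ≤ n) (hr1 : 1 ≤ r) (hr2 : r ≤ n - 3) :
    ((Jset n).erase (2 * n - 1)).filter (fun i => rho n i = r)
      = {r + 1, n + r} := by
  ext i
  rw [Finset.mem_filter, mem_Jp hn, Finset.mem_insert, Finset.mem_singleton]
  unfold rho
  split_ifs <;> omega

lemma vdm_inj {n : ℕ} (hn : 3 ≤ n) {ε : ℂ} (hprim : IsPrimitiveRoot ε (n - 1)) :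
    Function.Injective (fun s : Fin (n - 1) => ε ^ (s : ℕ)) := by
  intro s tt h
  exact Fin.ext (hprim.pow_inj s.2 tt.2 h)

lemma vdm_vecMul {n : ℕ} (hn : 3 ≤ n) {ε : ℂ} (hprim : IsPrimitiveRoot ε (n - 1))
    {c : Fin (n - 1) → ℂ}
    (h : ∀ r : Fin (n - 1), ∑ s : Fin (n - 1), c s * (ε ^ (s : ℕ)) ^ (r : ℕ) = 0) :
    c = 0 :=
  Matrix.eq_zero_of_forall_pow_sum_mul_pow_eq_zero (vdm_inj hn hprim) h

lemma vdm_mulVec {n : ℕ} (hn : 3 ≤ n) {ε : ℂ} (hprim : IsPrimitiveRoot ε (n - 1))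
    {c : Fin (n - 1) → ℂ}
    (h : ∀ s : Fin (n - 1), ∑ r : Fin (n - 1), c r * (ε ^ (s : ℕ)) ^ (r : ℕ) = 0) :
    c = 0 :=
  Matrix.eq_zero_of_forall_index_sum_mul_pow_eq_zero (vdm_inj hn hprim) h

lemma exists_ann (F Jp : Finset ℕ) (w : ℕ → ℕ → ℂ) (hcard : F.card < Jp.card) :
    ∃ d : ℕ → ℂ, (∃ i ∈ Jp, d i ≠ 0) ∧ (∀ k ∈ F, ∑ i ∈ Jp, d i * w k i = 0) := by
  classical
  have hker : LinearMap.ker (Matrix.of fun (k : ↥F) (i : ↥Jp) =>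
      w (k : ℕ) (i : ℕ)).mulVecLin ≠ ⊥ := by
    intro hbot
    have hinj : Function.Injective (Matrix.of fun (k : ↥F) (i : ↥Jp) =>
        w (k : ℕ) (i : ℕ)).mulVecLin := LinearMap.ker_eq_bot.mp hbot
    have hle := LinearMap.finrank_le_finrank_of_injective hinj
    rw [Module.finrank_fintype_fun_eq_card, Module.finrank_fintype_fun_eq_card,
      Fintype.card_coe, Fintype.card_coe] at hle
    omega
  obtain ⟨d₀, hd₀mem, hd₀ne⟩ := (Submodule.ne_bot_iff _).mp hker
  have hmv : ∀ k : ↥F, ∑ i : ↥Jp, w (k : ℕ) (i : ℕ) * d₀ i = 0 := by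
    intro k
    have h := congrFun (LinearMap.mem_ker.mp hd₀mem) k
    simpa [Matrix.mulVecLin_apply, Matrix.mulVec, dotProduct] using h
  refine ⟨fun i => if h : i ∈ Jp then d₀ ⟨i, h⟩ else 0, ?_, ?_⟩
  · obtain ⟨x, hx⟩ := Function.ne_iff.mp hd₀ne
    refine ⟨(x : ℕ), x.2, ?_⟩
    show (if h : (x : ℕ) ∈ Jp then d₀ ⟨(x : ℕ), h⟩ else 0) ≠ 0
    rw [dif_pos x.2]
    simpa using hx
  · intro k hk
    show ∑ i ∈ Jp, (if h : i ∈ Jp then d₀ ⟨i, h⟩ else 0) * w k i = 0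
    rw [← Finset.sum_coe_sort Jp (fun i => (if h : i ∈ Jp then d₀ ⟨i, h⟩ else 0) * w k i)]
    refine Eq.trans ?_ (hmv ⟨k, hk⟩)
    refine Finset.sum_congr rfl fun i _ => ?_
    rw [dif_pos i.2]
    rw [mul_comm]

lemma pow_rootpow {n j : ℕ} (hn : 3 ≤ n) {ζ : ℂ} (hζ1 : ζ ^ (n - 1) = 1) :
    ζ ^ (n ^ j) = ζ := by
  have hdvd : (n - 1) ∣ n ^ j - 1 := by simpa using Nat.sub_dvd_pow_sub_pow n 1 j
  obtain ⟨c, hc⟩ := hdvd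
  have h1 : n ^ j = (n - 1) * c + 1 := by
    have : 1 ≤ n ^ j := Nat.one_le_pow _ _ (by omega)
    omega
  rw [h1, pow_add, pow_mul, hζ1, one_pow, pow_one, one_mul]

lemma Jcard {n : ℕ} (hn : 3 ≤ n) : (Jset n).card = 2 * n - 2 := by
  have h1 : Jset n = Finset.range (2 * n) \ {n - 1, n} := by
    ext i
    rw [mem_Jset, Finset.mem_sdiff, Finset.mem_range, Finset.mem_insert, Finset.mem_singleton]
    omega
  rw [h1, Finset.card_sdiff_of_subset]
  · rw [Finset.card_range, Finset.card_insert_of_notMem (by simp; omega),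
      Finset.card_singleton]
  · intro i hi
    rw [Finset.mem_insert, Finset.mem_singleton] at hi
    rw [Finset.mem_range]
    omega

lemma build {n : ℕ} (hn : 3 ≤ n) (m : ℕ → ℕ) (K1 K2 : Finset ℕ)
    (hK1m : ∀ k ∈ K1, m k = 1) (hK1J : K1 ⊆ Jset n)
    (hK2 : ∀ k ∈ K2, k ∈ Jset n ∧ 3 ≤ m k)
    (hK12 : ∀ k ∈ K2, k ∉ K1)
    (hK2card : K2.card ≤ n - 2)
    (e : ↥K1 ≃ Fin (n - 1))
    {ε : ℂ} (hprim : IsPrimitiveRoot ε (n - 1)) :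
    ∀ s : Finset ℕ, s ⊆ K2 → ∃ z : ℕ → ℂ,
      (∀ k : ↥K1, z (k : ℕ) = ε ^ ((e k : ℕ))) ∧
      (∀ k ∈ s, z k ≠ 0 ∧ z k ^ (n ^ (m k)) = z k ∧
        ∀ j, 1 ≤ j → j < m k → (z k) ^ (n ^ j) ≠ z k) ∧
      (∀ c : ℕ → ℂ,
        (∀ i ∈ (Jset n).erase (2 * n - 1),
          ∑ k ∈ K1 ∪ s, c k * Wf n (m k) (z k) i = 0) →
        ∀ k ∈ K1 ∪ s, c k = 0) := by
  classical
  have hn1 : n - 1 ≠ 0 := by omega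
  have hε0 : ε ≠ 0 := hprim.ne_zero hn1
  have hε1 : ε ^ (n - 1) = 1 := hprim.pow_eq_one
  have hζ1 : ∀ a : ℕ, (ε ^ a) ^ (n - 1) = 1 := by
    intro a
    rw [← pow_mul, mul_comm, pow_mul, hε1, one_pow]
  have hζ0 : ∀ a : ℕ, (ε ^ a) ≠ 0 := fun a => pow_ne_zero _ hε0
  have hcol : ∀ r : Fin (n - 1), ∃ i, i ∈ (Jset n).erase (2 * n - 1) ∧ rho n i = (r : ℕ) := by
    intro r
    have hrlt : (r : ℕ) < n - 1 := r.2
    by_cases h0 : (r : ℕ) = 0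
    · refine ⟨1, ?_, ?_⟩
      · rw [mem_Jp hn]; omega
      · show rho n 1 = (r : ℕ)
        unfold rho
        rw [if_pos (by omega), if_neg (by omega)]
        omega
    · refine ⟨n + (r : ℕ), ?_, ?_⟩
      · rw [mem_Jp hn]; omega
      · show rho n (n + (r : ℕ)) = (r : ℕ)
        unfold rho
        rw [if_neg (by omega)]
        omega
  have hfiber : ∀ f : ℕ → ℂ, ∑ i ∈ (Jset n).erase (2 * n - 1), f i
      = ∑ r : Fin (n - 1), ∑ i ∈ ((Jset n).erase (2 * n - 1)).filter
          (fun i => rho n i = (r : ℕ)), f i := by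
    intro f
    rw [← Finset.sum_range
      (fun r => ∑ i ∈ ((Jset n).erase (2 * n - 1)).filter (fun i => rho n i = r), f i)]
    exact (Finset.sum_fiberwise_of_maps_to
      (fun i hi => Finset.mem_range.mpr (rho_lt hn hi)) f).symm
  intro s
  induction s using Finset.induction_on with
  | empty =>
    intro _
    refine ⟨fun k => if h : k ∈ K1 then ε ^ ((e ⟨k, h⟩ : ℕ)) else 1, ?_, ?_, ?_⟩
    · intro k
      show (if h : (k : ℕ) ∈ K1 then ε ^ ((e ⟨(k : ℕ), h⟩ : ℕ)) else 1) = ε ^ ((e k : ℕ))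
      rw [dif_pos k.2, Subtype.coe_eta]
    · intro k hk
      exact absurd hk (Finset.notMem_empty k)
    · intro c hrel k hk
      rw [Finset.union_empty] at hk
      have hurel : ∀ r : Fin (n - 1),
          ∑ s' : Fin (n - 1), c ((e.symm s' : ℕ)) * (ε ^ ((s' : ℕ))) ^ ((r : ℕ)) = 0 := by
        intro r
        obtain ⟨i, hiJ, hirho⟩ := hcol r
        have h1 := hrel i hiJ
        rw [Finset.union_empty, ← Finset.sum_coe_sort K1] at h1
        rw [← Equiv.sum_comp e.symm (fun x : ↥K1 => c ((x : ℕ)) *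
          Wf n (m (x : ℕ)) (if h : (x : ℕ) ∈ K1 then ε ^ ((e ⟨(x : ℕ), h⟩ : ℕ)) else 1) i)]
          at h1
        rw [← h1]
        refine Finset.sum_congr rfl fun s' _ => ?_
        congr 1
        have hmem := (e.symm s').2
        rw [dif_pos hmem, Subtype.coe_eta, Equiv.apply_symm_apply,
          hK1m _ hmem, Wf_one hn (hζ0 _) (hζ1 _) (Finset.mem_of_mem_erase hiJ), hirho]
      have hu0 := vdm_vecMul hn hprim hurel
      have : c ((e.symm (e ⟨k, hk⟩) : ℕ)) = 0 := congrFun hu0 (e ⟨k, hk⟩)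
      rwa [Equiv.symm_apply_apply] at this
  | @insert k₀ s' hk₀ ih =>
    intro hsub
    have hk₀K2 : k₀ ∈ K2 := hsub (Finset.mem_insert_self _ _)
    have hs'sub : s' ⊆ K2 := fun x hx => hsub (Finset.mem_insert_of_mem hx)
    obtain ⟨z', hzK1, hzpts, hindep⟩ := ih hs'sub
    have hk₀K1 : k₀ ∉ K1 := hK12 k₀ hk₀K2
    have hk₀F : k₀ ∉ K1 ∪ s' := by
      rw [Finset.mem_union]
      push_neg
      exact ⟨hk₀K1, hk₀⟩
    set mk := m k₀ with hmk
    have hmk3 : 3 ≤ mk := (hK2 k₀ hk₀K2).2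
    -- cardinalities
    have hK1card : K1.card = n - 1 := by
      have h1 : Fintype.card ↥K1 = Fintype.card (Fin (n - 1)) := Fintype.card_congr e
      rwa [Fintype.card_coe, Fintype.card_fin] at h1
    have hs'card : s'.card + 1 ≤ n - 2 := by
      have h1 := Finset.card_le_card hsub
      rw [Finset.card_insert_of_notMem hk₀] at h1
      omega
    have hJ'card : ((Jset n).erase (2 * n - 1)).card = 2 * n - 3 := by
      rw [Finset.card_erase_of_mem (by rw [mem_Jset]; omega), Jcard hn]
      omega
    have hFcard : (K1 ∪ s').card < ((Jset n).erase (2 * n - 1)).card := by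
      have h1 := Finset.card_union_le K1 s'
      omega
    obtain ⟨d, ⟨istar, histar, hdstar⟩, hann⟩ :=
      exists_ann (K1 ∪ s') ((Jset n).erase (2 * n - 1))
        (fun k i => Wf n (m k) (z' k) i) hFcard
    -- fiber sums of d vanish
    have hDall : ∀ r : Fin (n - 1),
        ∑ i ∈ ((Jset n).erase (2 * n - 1)).filter (fun i => rho n i = (r : ℕ)), d i = 0 := by
      have hrel0 : ∀ s₀ : Fin (n - 1),
          ∑ r : Fin (n - 1),
            (∑ i ∈ ((Jset n).erase (2 * n - 1)).filter (fun i => rho n i = (r : ℕ)), d i) *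
              (ε ^ ((s₀ : ℕ))) ^ ((r : ℕ)) = 0 := by
        intro s₀
        have hkK1 : ((e.symm s₀ : ↥K1) : ℕ) ∈ K1 := (e.symm s₀).2
        have h1 := hann _ (Finset.mem_union_left _ hkK1)
        have hz'k : z' ((e.symm s₀ : ℕ)) = ε ^ ((s₀ : ℕ)) := by
          rw [hzK1 (e.symm s₀), Equiv.apply_symm_apply]
        calc ∑ r : Fin (n - 1),
            (∑ i ∈ ((Jset n).erase (2 * n - 1)).filter (fun i => rho n i = (r : ℕ)), d i) *
              (ε ^ ((s₀ : ℕ))) ^ ((r : ℕ))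
            = ∑ r : Fin (n - 1),
              ∑ i ∈ ((Jset n).erase (2 * n - 1)).filter (fun i => rho n i = (r : ℕ)),
                d i * (ε ^ ((s₀ : ℕ))) ^ (rho n i) := by
              refine Finset.sum_congr rfl fun r _ => ?_
              rw [Finset.sum_mul]
              refine Finset.sum_congr rfl fun i hi => ?_
              rw [(Finset.mem_filter.mp hi).2]
          _ = ∑ i ∈ (Jset n).erase (2 * n - 1), d i * (ε ^ ((s₀ : ℕ))) ^ (rho n i) :=
              (hfiber _).symm
          _ = ∑ i ∈ (Jset n).erase (2 * n - 1),
                d i * Wf n (m ((e.symm s₀ : ℕ))) (z' ((e.symm s₀ : ℕ))) i := by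
              refine Finset.sum_congr rfl fun i hi => ?_
              rw [hK1m _ hkK1, hz'k,
                Wf_one hn (hζ0 _) (hζ1 _) (Finset.mem_of_mem_erase hi)]
          _ = 0 := h1
      intro r
      exact congrFun (vdm_mulVec hn hprim hrel0) r
    -- find the good pair index
    have hr₀ex : ∃ r₀, 1 ≤ r₀ ∧ r₀ ≤ n - 2 ∧ d (n + r₀) ≠ 0 := by
      have hD0 : d 1 = 0 := by
        have h1 := hDall ⟨0, by omega⟩
        rwa [fiber0 hn, Finset.sum_singleton] at h1
      have hDtop : d 0 + d (2 * n - 2) = 0 := by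
        have h1 := hDall ⟨n - 2, by omega⟩
        rwa [fiberTop hn, Finset.sum_pair (by omega : (0 : ℕ) ≠ 2 * n - 2)] at h1
      have hDmid : ∀ r, 1 ≤ r → r ≤ n - 3 → d (r + 1) + d (n + r) = 0 := by
        intro r h1r h2r
        have h1 := hDall ⟨r, by omega⟩
        rwa [fiberMid hn h1r h2r, Finset.sum_pair (by omega : r + 1 ≠ n + r)] at h1
      rw [mem_Jp hn] at histar
      rcases histar with hlow | hhigh
      · by_cases h1 : istar = 1
        · exact absurd (h1 ▸ hdstar) (by simp [hD0])
        · by_cases h0 : istar = 0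
          · refine ⟨n - 2, by omega, by omega, ?_⟩
            rw [show n + (n - 2) = 2 * n - 2 by omega]
            intro hzero
            rw [h0] at hdstar
            exact hdstar (by linear_combination hDtop - hzero)
          · refine ⟨istar - 1, by omega, by omega, ?_⟩
            intro hzero
            have h2 := hDmid (istar - 1) (by omega) (by omega)
            rw [show istar - 1 + 1 = istar by omega] at h2
            exact hdstar (by linear_combination h2 - hzero)
      · refine ⟨istar - n, by omega, by omega, ?_⟩
        rw [show n + (istar - n) = istar by omega]
        exact hdstar
    obtain ⟨r₀, hr₀1, hr₀2, hdr₀⟩ := hr₀ex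
    obtain ⟨ξ, hξ0, hξper, hξmin, hBne⟩ := exists_xi hn hmk3 hr₀1 hr₀2
    -- grouping of the candidate row
    have hgroup : ∀ a : ℕ,
        ∑ i ∈ (Jset n).erase (2 * n - 1), d i * Wf n mk (ε ^ a * ξ) i
          = ∑ r : Fin (n - 1),
              (∑ i ∈ ((Jset n).erase (2 * n - 1)).filter (fun i => rho n i = (r : ℕ)),
                d i * Sg n mk ξ ((i : ℤ) - n)) * (ε ^ a) ^ ((r : ℕ)) := by
      intro a
      calc ∑ i ∈ (Jset n).erase (2 * n - 1), d i * Wf n mk (ε ^ a * ξ) i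
          = ∑ i ∈ (Jset n).erase (2 * n - 1),
              (d i * Sg n mk ξ ((i : ℤ) - n)) * (ε ^ a) ^ (rho n i) := by
            refine Finset.sum_congr rfl fun i hi => ?_
            rw [Wf_mul hn (hζ0 a) hξ0 (hζ1 a) (Finset.mem_of_mem_erase hi) mk]
            ring
        _ = ∑ r : Fin (n - 1),
              ∑ i ∈ ((Jset n).erase (2 * n - 1)).filter (fun i => rho n i = (r : ℕ)),
                (d i * Sg n mk ξ ((i : ℤ) - n)) * (ε ^ a) ^ (rho n i) := hfiber _
        _ = ∑ r : Fin (n - 1),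
              (∑ i ∈ ((Jset n).erase (2 * n - 1)).filter (fun i => rho n i = (r : ℕ)),
                d i * Sg n mk ξ ((i : ℤ) - n)) * (ε ^ a) ^ ((r : ℕ)) := by
            refine Finset.sum_congr rfl fun r _ => ?_
            rw [Finset.sum_mul]
            refine Finset.sum_congr rfl fun i hi => ?_
            rw [(Finset.mem_filter.mp hi).2]
    -- the key fiber value is nonzero
    have hAne : (∑ i ∈ ((Jset n).erase (2 * n - 1)).filter (fun i => rho n i = r₀),
        d i * Sg n mk ξ ((i : ℤ) - n)) ≠ 0 := by
      by_cases hcase : r₀ ≤ n - 3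
      · rw [fiberMid hn hr₀1 hcase, Finset.sum_pair (by omega : r₀ + 1 ≠ n + r₀)]
        have hrel := hDall ⟨r₀, by omega⟩
        rw [fiberMid hn hr₀1 hcase, Finset.sum_pair (by omega : r₀ + 1 ≠ n + r₀)] at hrel
        have e1 : ((r₀ + 1 : ℕ) : ℤ) - n = (r₀ : ℤ) - ((n : ℤ) - 1) := by push_cast; ring
        have e2 : ((n + r₀ : ℕ) : ℤ) - n = (r₀ : ℤ) := by push_cast; ring
        rw [e1, e2]
        have hval : d (r₀ + 1) * Sg n mk ξ ((r₀ : ℤ) - ((n : ℤ) - 1))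
            + d (n + r₀) * Sg n mk ξ (r₀ : ℤ) = d (n + r₀) * Bf n mk r₀ ξ := by
          unfold Bf
          have hd1 : d (r₀ + 1) = - d (n + r₀) := by linear_combination hrel
          rw [hd1]
          ring
        rw [hval]
        exact mul_ne_zero hdr₀ hBne
      · have hr₀eq : r₀ = n - 2 := by omega
        subst hr₀eq
        rw [fiberTop hn, Finset.sum_pair (by omega : (0 : ℕ) ≠ 2 * n - 2)]
        have hrel := hDall ⟨n - 2, by omega⟩
        rw [fiberTop hn, Finset.sum_pair (by omega : (0 : ℕ) ≠ 2 * n - 2)] at hrel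
        have e1 : ((0 : ℕ) : ℤ) - n = -(n : ℤ) := by push_cast; ring
        have e2 : ((2 * n - 2 : ℕ) : ℤ) - n = ((n - 2 : ℕ) : ℤ) := by
          push_cast [show 2 ≤ 2 * n by omega, show 2 ≤ n by omega]
          ring
        have e3 : ((n - 2 : ℕ) : ℤ) - ((n : ℤ) - 1) = -1 := by
          push_cast [show 2 ≤ n by omega]
          ring
        rw [e1, e2, Sg_shift hn hξ0 (by omega) hξper]
        have hval : d 0 * Sg n mk ξ (-1) + d (2 * n - 2) * Sg n mk ξ ((n - 2 : ℕ) : ℤ)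
            = d (2 * n - 2) * Bf n mk (n - 2) ξ := by
          unfold Bf
          rw [e3]
          have hd1 : d 0 = - d (2 * n - 2) := by linear_combination hrel
          rw [hd1]
          ring
        rw [hval]
        rw [show n + (n - 2) = 2 * n - 2 by omega] at hdr₀
        exact mul_ne_zero hdr₀ hBne
    -- choose the root of unity factor
    have hs₀ex : ∃ s₀ : Fin (n - 1),
        ∑ i ∈ (Jset n).erase (2 * n - 1), d i * Wf n mk (ε ^ ((s₀ : ℕ)) * ξ) i ≠ 0 := by
      by_contra hcon
      push_neg at hcon
      have hzero := vdm_mulVec hn hprim (c := fun r : Fin (n - 1) =>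
        ∑ i ∈ ((Jset n).erase (2 * n - 1)).filter (fun i => rho n i = (r : ℕ)),
          d i * Sg n mk ξ ((i : ℤ) - n)) (fun s₀ => by rw [← hgroup]; exact hcon s₀)
      have := congrFun hzero ⟨r₀, by omega⟩
      exact hAne this
    obtain ⟨s₀, hG⟩ := hs₀ex
    refine ⟨Function.update z' k₀ (ε ^ ((s₀ : ℕ)) * ξ), ?_, ?_, ?_⟩
    · intro k
      rw [Function.update_of_ne (by rintro rfl; exact hk₀K1 k.2), hzK1]
    · intro k hk
      rcases Finset.mem_insert.mp hk with rfl | hks'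
      · rw [Function.update_self]
        refine ⟨mul_ne_zero (hζ0 _) hξ0, ?_, ?_⟩
        · rw [mul_pow, pow_rootpow hn (hζ1 _), hξper]
        · intro j hj1 hj2 heq
          rw [mul_pow, pow_rootpow hn (hζ1 _)] at heq
          exact hξmin j hj1 hj2 (mul_left_cancel₀ (hζ0 _) heq)
      · rw [Function.update_of_ne (by rintro rfl; exact hk₀ hks')]
        exact hzpts k hks'
    · intro c hrel
      rw [Finset.union_insert] at hrel ⊢
      have hupd : ∀ k ∈ K1 ∪ s', Function.update z' k₀ (ε ^ ((s₀ : ℕ)) * ξ) k = z' k := by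
        intro k hk
        exact Function.update_of_ne (by rintro rfl; exact hk₀F hk) _ _
      have hck₀ : c k₀ = 0 := by
        have h0 : ∑ i ∈ (Jset n).erase (2 * n - 1),
            d i * ∑ k ∈ insert k₀ (K1 ∪ s'),
              c k * Wf n (m k) (Function.update z' k₀ (ε ^ ((s₀ : ℕ)) * ξ) k) i = 0 := by
          refine Finset.sum_eq_zero fun i hi => ?_
          rw [hrel i hi, mul_zero]
        have hswap : ∑ i ∈ (Jset n).erase (2 * n - 1),
            d i * ∑ k ∈ insert k₀ (K1 ∪ s'),
              c k * Wf n (m k) (Function.update z' k₀ (ε ^ ((s₀ : ℕ)) * ξ) k) i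
            = ∑ k ∈ insert k₀ (K1 ∪ s'),
                c k * ∑ i ∈ (Jset n).erase (2 * n - 1),
                  d i * Wf n (m k) (Function.update z' k₀ (ε ^ ((s₀ : ℕ)) * ξ) k) i := by
          simp_rw [Finset.mul_sum]
          rw [Finset.sum_comm]
          refine Finset.sum_congr rfl fun k _ => ?_
          refine Finset.sum_congr rfl fun i _ => ?_
          ring
        rw [hswap, Finset.sum_insert hk₀F, Function.update_self] at h0
        have hrest : ∑ k ∈ K1 ∪ s',
            c k * ∑ i ∈ (Jset n).erase (2 * n - 1),
              d i * Wf n (m k) (Function.update z' k₀ (ε ^ ((s₀ : ℕ)) * ξ) k) i = 0 := by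
          refine Finset.sum_eq_zero fun k hk => ?_
          have h2 : ∑ i ∈ (Jset n).erase (2 * n - 1),
              d i * Wf n (m k) (Function.update z' k₀ (ε ^ ((s₀ : ℕ)) * ξ) k) i = 0 := by
            rw [show (fun i => d i * Wf n (m k)
              (Function.update z' k₀ (ε ^ ((s₀ : ℕ)) * ξ) k) i)
              = fun i => d i * Wf n (m k) (z' k) i by funext i; rw [hupd k hk]]
            exact hann k hk
          rw [h2, mul_zero]
        rw [hrest, add_zero] at h0
        exact (mul_eq_zero.mp h0).resolve_right hG
      have hcrest : ∀ k ∈ K1 ∪ s', c k = 0 := by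
        apply hindep
        intro i hi
        have h1 := hrel i hi
        rw [Finset.sum_insert hk₀F, hck₀, zero_mul, zero_add] at h1
        rw [← h1]
        refine Finset.sum_congr rfl fun k hk => ?_
        rw [hupd k hk]
      intro k hk
      rcases Finset.mem_insert.mp hk with rfl | hkF
      · exact hck₀
      · exact hcrest k hkF

end AuxiliaryForProp71

/-- Proposition 7.1 (case of exactly `n` fixed points, using the fixed point at
infinity): for `n ≥ 3` and periods `(m_k)_{k ∈ J_n}` with exactly `n` of them equal to
`1`, none equal to `2`, and at least one greater than `2`, there exist an index
`t ∈ J_n` with `m_t = 1` and nonzero periodic points `z_k` of minimal periods `m_k`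
(for `k ∈ J_n`, `k ≠ t`) such that the `(2n-2)×(2n-2)` matrix whose row `t` is
`(0,…,0,-1)` (entry `-1` in column `2n-1`) and whose `(k,i)`-entry for `k ≠ t` is
`z_k^{-n^{m_k-1}} P_{n,i,m_k}(z_k)` is invertible. -/
theorem exists_independent_multipliers_with_infinity (n : ℕ) (hn : 3 ≤ n) (m : ℕ → ℕ)
    (hm1 : ∀ k ∈ Jset n, 1 ≤ m k)
    (hcard : ((Jset n).filter (fun k => m k = 1)).card = n)
    (hne2 : ∀ k ∈ Jset n, m k ≠ 2)
    (hex : ∃ k ∈ Jset n, 2 < m k) :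
    ∃ t ∈ Jset n, m t = 1 ∧
      ∃ z : ℕ → ℂ,
        (∀ k ∈ Jset n, k ≠ t → z k ≠ 0 ∧ z k ∈ perSet n (m k)) ∧
        (Matrix.of fun (k i : (Jset n : Finset ℕ)) =>
          if (k : ℕ) = t then (if (i : ℕ) = 2 * n - 1 then (-1 : ℂ) else 0)
          else
            z (k : ℕ) ^ (-((n : ℤ) ^ (m (k : ℕ) - 1))) *
              (P n (i : ℕ) (m (k : ℕ))).eval (z (k : ℕ))).det ≠ 0 := by
  classical
  have hfil : ((Jset n).filter (fun k => m k = 1)).Nonempty := by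
    rw [← Finset.card_pos, hcard]; omega
  obtain ⟨t, htfil⟩ := hfil
  obtain ⟨htJ, htm⟩ := Finset.mem_filter.mp htfil
  refine ⟨t, htJ, htm, ?_⟩
  set K1 := ((Jset n).filter (fun k => m k = 1)).erase t with hK1def
  set K2 := (Jset n).filter (fun k => m k ≠ 1) with hK2def
  have hJcard := Jcard hn
  have hK1card : K1.card = n - 1 := by
    rw [hK1def, Finset.card_erase_of_mem htfil, hcard]
  have hK2card : K2.card = n - 2 := by
    have h1 := Finset.card_filter_add_card_filter_not
      (s := Jset n) (p := fun k => m k = 1)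
    simp only [← hK2def] at h1
    omega
  have e : ↥K1 ≃ Fin (n - 1) := Finset.equivFinOfCardEq hK1card
  have hprim : IsPrimitiveRoot (Complex.exp (2 * Real.pi * Complex.I / ((n - 1 : ℕ) : ℂ)))
      (n - 1) := Complex.isPrimitiveRoot_exp _ (by omega)
  set ε := Complex.exp (2 * Real.pi * Complex.I / ((n - 1 : ℕ) : ℂ)) with hεdef
  have hε0 : ε ≠ 0 := hprim.ne_zero (by omega)
  have hε1 : ε ^ (n - 1) = 1 := hprim.pow_eq_one
  have hζ1 : ∀ a : ℕ, (ε ^ a) ^ (n - 1) = 1 := by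
    intro a
    rw [← pow_mul, mul_comm, pow_mul, hε1, one_pow]
  have hK1m : ∀ k ∈ K1, m k = 1 := fun k hk =>
    (Finset.mem_filter.mp (Finset.mem_of_mem_erase hk)).2
  have hbuild := build hn m K1 K2 hK1m
    (fun k hk => (Finset.mem_filter.mp (Finset.mem_of_mem_erase hk)).1)
    (fun k hk => by
      obtain ⟨hkJ, hk1⟩ := Finset.mem_filter.mp hk
      have h1 := hm1 k hkJ
      have h2 := hne2 k hkJ
      exact ⟨hkJ, by omega⟩)
    (fun k hk hkK1 => (Finset.mem_filter.mp hk).2 (hK1m k hkK1))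
    (le_of_eq hK2card) e hprim K2 (subset_refl _)
  obtain ⟨z, hzK1, hzpts, hindep⟩ := hbuild
  have hS : K1 ∪ K2 = (Jset n).erase t := by
    ext k
    rw [Finset.mem_union, hK1def, hK2def, Finset.mem_erase, Finset.mem_erase,
      Finset.mem_filter, Finset.mem_filter]
    constructor
    · rintro (⟨hkt, hkJ, _⟩ | ⟨hkJ, hk1⟩)
      · exact ⟨hkt, hkJ⟩
      · exact ⟨fun h => hk1 (by rw [h, htm]), hkJ⟩
    · rintro ⟨hkt, hkJ⟩
      by_cases h1 : m k = 1
      · exact Or.inl ⟨hkt, hkJ, h1⟩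
      · exact Or.inr ⟨hkJ, h1⟩
  rw [hS] at hindep
  have hzprops : ∀ k ∈ (Jset n).erase t, z k ≠ 0 ∧ z k ^ (n ^ (m k)) = z k ∧
      ∀ j, 1 ≤ j → j < m k → (z k) ^ (n ^ j) ≠ z k := by
    intro k hk
    rw [← hS] at hk
    rcases Finset.mem_union.mp hk with hkK1 | hkK2
    · have hz := hzK1 ⟨k, hkK1⟩
      refine ⟨by rw [hz]; exact pow_ne_zero _ hε0, ?_, ?_⟩
      · rw [hz]
        exact pow_rootpow hn (hζ1 _)
      · intro j hj1 hj2
        have := hK1m k hkK1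
        omega
    · exact hzpts k hkK2
  refine ⟨z, ?_, ?_⟩
  · intro k hkJ hkt
    have hk : k ∈ (Jset n).erase t := Finset.mem_erase.mpr ⟨hkt, hkJ⟩
    obtain ⟨h0, hper, hmin⟩ := hzprops k hk
    refine ⟨h0, ?_⟩
    simp only [perSet, Set.mem_setOf_eq, iterate_pow_apply]
    exact ⟨hper, hmin⟩
  · intro hdet
    obtain ⟨v, hv0, hv⟩ := Matrix.exists_vecMul_eq_zero_iff.mpr hdet
    have hv' : ∀ i : ↥(Jset n),
        ∑ k : ↥(Jset n), v k *
          (if (k : ℕ) = t then (if (i : ℕ) = 2 * n - 1 then (-1 : ℂ) else 0)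
           else z (k : ℕ) ^ (-((n : ℤ) ^ (m (k : ℕ) - 1))) *
             (P n (i : ℕ) (m (k : ℕ))).eval (z (k : ℕ))) = 0 := by
      intro i
      have h1 := congrFun hv i
      simpa [Matrix.vecMul, dotProduct, Matrix.of_apply] using h1
    set c : ℕ → ℂ := fun k =>
      if h : k ∈ Jset n then
        (if k = t then 0 else v ⟨k, h⟩ * ((n : ℂ)) ^ (m k - 1))
      else 0 with hcdef
    have hcall : ∀ k ∈ (Jset n).erase t, c k = 0 := by
      apply hindep
      intro i hiJ'
      have hiJ : i ∈ Jset n := Finset.mem_of_mem_erase hiJ'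
      have hi2n : i ≠ 2 * n - 1 := (Finset.mem_erase.mp hiJ').1
      have hin : ((i : ℂ) - n) ≠ 0 := by
        have hne : i ≠ n := (mem_Jset.mp hiJ).2.2
        intro h
        exact hne (by exact_mod_cast sub_eq_zero.mp h)
      have h1 := hv' ⟨i, hiJ⟩
      have hterm : ∀ k : ↥(Jset n),
          v k * (if (k : ℕ) = t then (if i = 2 * n - 1 then (-1 : ℂ) else 0)
            else z (k : ℕ) ^ (-((n : ℤ) ^ (m (k : ℕ) - 1))) *
              (P n i (m (k : ℕ))).eval (z (k : ℕ)))
          = ((i : ℂ) - n) * (c (k : ℕ) * Wf n (m (k : ℕ)) (z (k : ℕ)) i) := by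
        intro k
        by_cases hkt : (k : ℕ) = t
        · rw [if_pos hkt, if_neg hi2n, hcdef]
          simp only [dif_pos k.2, if_pos hkt]
          ring
        · rw [if_neg hkt]
          have hkS : (k : ℕ) ∈ (Jset n).erase t := Finset.mem_erase.mpr ⟨hkt, k.2⟩
          obtain ⟨h0, hper, _⟩ := hzprops _ hkS
          rw [eval_P hn (hm1 _ k.2) hiJ h0 hper, hcdef]
          simp only [dif_pos k.2, if_neg hkt, Subtype.coe_eta]
          ring
      rw [Finset.sum_congr rfl (fun k _ => hterm k)] at h1
      rw [← Finset.mul_sum] at h1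
      have h2 := (mul_eq_zero.mp h1).resolve_left hin
      rw [Finset.sum_coe_sort (Jset n) (fun k => c k * Wf n (m k) (z k) i)] at h2
      have hct : c t * Wf n (m t) (z t) i = 0 := by
        have hc0 : c t = 0 := by rw [hcdef]; simp [htJ]
        rw [hc0, zero_mul]
      rw [← Finset.sum_erase (Jset n) hct] at h2
      exact h2
    have hvzero : ∀ k : ↥(Jset n), (k : ℕ) ≠ t → v k = 0 := by
      intro k hkt
      have hkS : (k : ℕ) ∈ (Jset n).erase t := Finset.mem_erase.mpr ⟨hkt, k.2⟩
      have h1 := hcall _ hkS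
      rw [hcdef] at h1
      simp only [dif_pos k.2, if_neg hkt, Subtype.coe_eta] at h1
      have hnn : ((n : ℂ)) ^ (m (k : ℕ) - 1) ≠ 0 := by
        apply pow_ne_zero
        exact_mod_cast (by omega : n ≠ 0)
      exact (mul_eq_zero.mp h1).resolve_right hnn
    have h2nJ : (2 * n - 1) ∈ Jset n := mem_Jset.mpr (by omega)
    have hlast := hv' ⟨2 * n - 1, h2nJ⟩
    rw [Finset.sum_eq_single (⟨t, htJ⟩ : ↥(Jset n))] at hlast
    · simp only [if_pos rfl] at hlast
      have hvt : v ⟨t, htJ⟩ = 0 := by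
        have : v ⟨t, htJ⟩ * (-1 : ℂ) = 0 := by simpa using hlast
        simpa using this
      apply hv0
      funext k
      by_cases hkt : (k : ℕ) = t
      · have : k = ⟨t, htJ⟩ := Subtype.ext hkt
        rw [this]
        exact hvt
      · exact hvzero k hkt
    · intro b _ hb
      have hbt : (b : ℕ) ≠ t := fun h => hb (Subtype.ext h)
      rw [hvzero b hbt, zero_mul]
    · intro habs
      exact absurd (Finset.mem_univ _) habs
end
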